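/- arXiv:2010.08368 — 8 statements merged into one kernel-verified Lean document; each statement's English description precedes it below -/
import Mathlib

section
/- Let k ≥ 2 be an integer, let G be a total k-uniform graph, and let v₁v₂ be an edge of G. Then the subgraph of G induced by V(G) \ (N[v₁] ∪ N[v₂]) has no isolated vertices. -/
open SimpleGraph

/-- `A ⊆ V(G)` is a total dominating set of `G`: every vertex has a neighbor in `A`. -/
def TotalDomSet {V : Type*} (G : SimpleGraph V) (A : Set V) : Prop :=
  ∀ v : V, ∃ a ∈ A, G.Adj v a

/-- `s` is a legal (open neighborhood) sequence of `G`: the vertices are distinct and every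
vertex after the first has a neighbor adjacent to no vertex preceding it in the sequence. -/
def LegalSeq {V : Type*} (G : SimpleGraph V) (s : List V) : Prop :=
  s.Nodup ∧ ∀ (i : ℕ) (h : i < s.length), 0 < i →
    ∃ w : V, G.Adj (s.get ⟨i, h⟩) w ∧ ∀ u ∈ s.take i, ¬ G.Adj u w

/-- `s` is a total dominating sequence of `G`: a legal sequence whose underlying set is a
total dominating set. -/
def TotalDomSeq {V : Type*} (G : SimpleGraph V) (s : List V) : Prop :=
  LegalSeq G s ∧ TotalDomSet G {v | v ∈ s}

/-- The total domination number `γ_t(G)`: the minimum size of a total dominating set. -/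
noncomputable def totalDomNum {V : Type*} (G : SimpleGraph V) : ℕ :=
  sInf {n | ∃ A : Set V, TotalDomSet G A ∧ A.ncard = n}

/-- The Grundy total domination number `γ_gr^t(G)`: the maximum length of a total dominating
sequence. -/
noncomputable def grundyTotalDomNum {V : Type*} (G : SimpleGraph V) : ℕ :=
  sSup {n | ∃ s : List V, TotalDomSeq G s ∧ s.length = n}

/-- `G` is total `k`-uniform if `γ_t(G) = γ_gr^t(G) = k`. -/
def TotalKUniform {V : Type*} (G : SimpleGraph V) (k : ℕ) : Prop :=
  totalDomNum G = k ∧ grundyTotalDomNum G = k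

/-- `G` has no isolated vertices. -/
def NoIsolatedVerts {V : Type*} (G : SimpleGraph V) : Prop :=
  ∀ v : V, ∃ w : V, G.Adj v w

/-- The closed neighborhood `N[v] = N(v) ∪ {v}`. -/
def closedNbhd {V : Type*} (G : SimpleGraph V) (v : V) : Set V :=
  insert v (G.neighborSet v)

/-- `G` is false twin-free: no two distinct vertices have the same (open) neighborhood. -/
def FalseTwinFree {V : Type*} (G : SimpleGraph V) : Prop :=
  ∀ u v : V, u ≠ v → G.neighborSet u ≠ G.neighborSet v

section aux
variable {V : Type*} (G : SimpleGraph V)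

lemma legal_append {s : List V} (hs : LegalSeq G s) {v : V} (hv : v ∉ s)
    (w : V) (hw : G.Adj v w) (hall : ∀ u ∈ s, ¬ G.Adj u w) :
    LegalSeq G (s ++ [v]) := by
  constructor
  · simp [List.nodup_append, hs.1, hv]
    exact fun a ha h => hv (h ▸ ha)
  · intro i h hi
    rcases lt_or_ge i s.length with h' | h'
    · obtain ⟨w', hw', hall'⟩ := hs.2 i h' hi
      refine ⟨w', ?_, ?_⟩
      · simpa [List.get_eq_getElem, List.getElem_append_left h'] using hw'
      · intro u hu
        apply hall'
        rwa [List.take_append_of_le_length (le_of_lt h')] at hu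
    · have hi' : i = s.length := by
        have : i < s.length + 1 := by simpa using h
        omega
      subst hi'
      refine ⟨w, ?_, ?_⟩
      · simpa [List.get_eq_getElem, List.getElem_concat_length] using hw
      · intro u hu
        apply hall
        rwa [List.take_left] at hu

lemma legal_tail {x : V} {t : List V} (h : LegalSeq G (x :: t)) : LegalSeq G t := by
  refine ⟨(List.nodup_cons.mp h.1).2, ?_⟩
  intro i hi _
  obtain ⟨w, hw, hall⟩ := h.2 (i+1) (by simpa using Nat.succ_lt_succ hi) (Nat.succ_pos i)
  refine ⟨w, by simpa using hw, ?_⟩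
  intro u hu
  exact hall u (by simp [List.take_succ_cons]; right; exact hu)

lemma exists_td_extension [Finite V] (hiso : ∀ v : V, ∃ w : V, G.Adj v w) :
    ∀ (n : ℕ) (s : List V), LegalSeq G s → Nat.card V ≤ s.length + n →
      ∃ t : List V, s <+: t ∧ TotalDomSeq G t := by
  have := Fintype.ofFinite V
  classical
  intro n
  induction n with
  | zero =>
    intro s hs hcard
    have hlen : s.length = Fintype.card V :=
      le_antisymm hs.1.length_le_card (by simpa [Nat.card_eq_fintype_card] using hcard)
    have hall : ∀ v : V, v ∈ s := by
      intro v
      have huniv : s.toFinset = Finset.univ :=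
        Finset.eq_univ_of_card _ (by rw [List.toFinset_card_of_nodup hs.1, hlen])
      simpa using (huniv ▸ Finset.mem_univ v : v ∈ s.toFinset)
    refine ⟨s, List.prefix_refl s, hs, fun v => ?_⟩
    obtain ⟨w, hw⟩ := hiso v
    exact ⟨w, hall w, hw⟩
  | succ n ih =>
    intro s hs hcard
    by_cases hmax : ∃ v, v ∉ s ∧ ∃ w, G.Adj v w ∧ ∀ u ∈ s, ¬ G.Adj u w
    · obtain ⟨v, hv, w, hw, hall⟩ := hmax
      obtain ⟨t, ht, htd⟩ := ih (s ++ [v]) (legal_append G hs hv w hw hall)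
        (by simp only [List.length_append, List.length_singleton]; omega)
      exact ⟨t, (List.prefix_append s [v]).trans ht, htd⟩
    · push_neg at hmax
      refine ⟨s, List.prefix_refl s, hs, fun v => ?_⟩
      obtain ⟨z, hz⟩ := hiso v
      by_cases hzs : z ∈ s
      · exact ⟨z, hzs, hz⟩
      · obtain ⟨u, hu, huw⟩ := hmax z hzs v hz.symm
        exact ⟨u, hu, huw.symm⟩

end aux

/-- If `v₁v₂` is an edge of a total `k`-uniform graph `G` (`k ≥ 2`), then the subgraph of `G`
induced by `V(G) \ (N[v₁] ∪ N[v₂])` has no isolated vertices. -/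


theorem stmt_0 {V : Type*} [Finite V] (G : SimpleGraph V) (k : ℕ) (hk : 2 ≤ k)
    (hiso : NoIsolatedVerts G) (huni : TotalKUniform G k)
    (v₁ v₂ : V) (hadj : G.Adj v₁ v₂) :
    NoIsolatedVerts (G.induce ((closedNbhd G v₁ ∪ closedNbhd G v₂)ᶜ)) := by
  classical
  by_contra hcon
  unfold NoIsolatedVerts at hcon
  push_neg at hcon
  obtain ⟨⟨x, hxS⟩, hx⟩ := hcon
  -- x is in the complement of S and has no neighbor there
  have hxS' : x ∉ closedNbhd G v₁ ∪ closedNbhd G v₂ := hxS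
  have hxv₁ : x ≠ v₁ := fun h => hxS' (Or.inl (h ▸ Set.mem_insert _ _))
  have hxv₂ : x ≠ v₂ := fun h => hxS' (Or.inr (h ▸ Set.mem_insert _ _))
  have hxa₁ : ¬ G.Adj x v₁ := fun h => hxS' (Or.inl (Set.mem_insert_of_mem _ h.symm))
  have hxa₂ : ¬ G.Adj x v₂ := fun h => hxS' (Or.inr (Set.mem_insert_of_mem _ h.symm))
  have hxadj : ∀ w, G.Adj x w → w ∈ closedNbhd G v₁ ∪ closedNbhd G v₂ := by
    intro w hw
    by_contra hwS
    exact hx ⟨w, hwS⟩ hw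
  -- the sequence [x, v₁, v₂] is legal
  have hleg : LegalSeq G [x, v₁, v₂] := by
    constructor
    · simp [hxv₁, hxv₂, hadj.ne]
    · intro i h hi
      have h3 : i < 3 := by simpa using h
      interval_cases i
      · exact ⟨v₂, by simpa using hadj, by simpa using hxa₂⟩
      · refine ⟨v₁, by simpa using hadj.symm, ?_⟩
        intro u hu
        simp at hu
        rcases hu with h | h <;> subst h
        · exact hxa₁
        · exact G.loopless.irrefl _
  obtain ⟨t, hpre, htd⟩ :=
    exists_td_extension G hiso (Nat.card V) [x, v₁, v₂] hleg (by omega)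
  obtain ⟨r', rfl⟩ := hpre
  set r : List V := v₁ :: v₂ :: r' with hr
  have hteq : [x, v₁, v₂] ++ r' = x :: r := by simp [hr]
  rw [hteq] at htd
  -- r is a total dominating sequence
  have hrtd : TotalDomSeq G r := by
    refine ⟨legal_tail G htd.1, ?_⟩
    intro v
    obtain ⟨a, ha, hav⟩ := htd.2 v
    rcases (List.mem_cons.mp ha) with rfl | har
    · -- a = x, so v ∈ N(x) ⊆ N[v₁] ∪ N[v₂]
      rcases hxadj v hav.symm with hv | hv
      · rcases hv with rfl | hv
        · exact ⟨v₂, by simp [hr], hadj⟩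
        · exact ⟨v₁, by simp [hr], (by simpa using hv : G.Adj v₁ v).symm⟩
      · rcases hv with rfl | hv
        · exact ⟨v₁, by simp [hr], hadj.symm⟩
        · exact ⟨v₂, by simp [hr], (by simpa using hv : G.Adj v₂ v).symm⟩
    · exact ⟨a, har, hav⟩
  -- length bounds
  have := Fintype.ofFinite V
  have hbdd : BddAbove {n | ∃ s : List V, TotalDomSeq G s ∧ s.length = n} := by
    refine ⟨Fintype.card V, ?_⟩
    rintro n ⟨s, hs, rfl⟩
    exact hs.1.1.length_le_card
  have hup : (x :: r).length ≤ k := by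
    have := le_csSup hbdd (Set.mem_setOf.mpr ⟨x :: r, htd, rfl⟩)
    rwa [show sSup {n | ∃ s : List V, TotalDomSeq G s ∧ s.length = n} = k from huni.2] at this
  have hrset : ({v | v ∈ r} : Set V).ncard = r.length := by
    have h1 : ({v | v ∈ r} : Set V) = ↑r.toFinset := by ext v; simp
    rw [h1, Set.ncard_coe_finset, List.toFinset_card_of_nodup hrtd.1.1]
  have hlow : k ≤ r.length := by
    have hmem : r.length ∈ {n | ∃ A : Set V, TotalDomSet G A ∧ A.ncard = n} :=
      ⟨{v | v ∈ r}, hrtd.2, hrset⟩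
    have := Nat.sInf_le hmem
    rwa [show sInf {n | ∃ A : Set V, TotalDomSet G A ∧ A.ncard = n} = k from huni.1] at this
  simp only [List.length_cons] at hup
  omega
end

section
/- Let k ≥ 3 be an integer, let G be a total k-uniform graph with no isolated vertices, and let uv be an edge of G. Then the subgraph of G induced by V(G) \ (N[u] ∪ N[v]) is nonempty, has no isolated vertices, and is total (k−2)-uniform. -/
open SimpleGraph

set_option linter.unusedSectionVars false

namespace Stmt1Aux

variable {V : Type*} {G : SimpleGraph V}

lemma legal_nil : LegalSeq G [] := ⟨List.nodup_nil, fun i h => by simp at h⟩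

lemma legal_tail {x : V} {s : List V} (h : LegalSeq G (x :: s)) : LegalSeq G s := by
  refine ⟨h.1.of_cons, fun i hi hpos => ?_⟩
  obtain ⟨w, hw1, hw2⟩ := h.2 (i+1) (by simpa using Nat.succ_lt_succ hi) (Nat.succ_pos i)
  refine ⟨w, by simpa using hw1, fun u hu => hw2 u ?_⟩
  simp [List.take_succ_cons]
  exact Or.inr hu

lemma legal_append_singleton {s : List V} {a w : V} (hs : LegalSeq G s) (ha : a ∉ s)
    (hw : G.Adj a w) (h : ∀ u ∈ s, ¬ G.Adj u w) : LegalSeq G (s ++ [a]) := by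
  refine ⟨by simp [List.nodup_append, hs.1, ha]; rintro b hb rfl; exact ha hb, fun i hi hpos => ?_⟩
  rcases lt_or_ge i s.length with hlt | hge
  · obtain ⟨w', hw1, hw2⟩ := hs.2 i hlt hpos
    refine ⟨w', ?_, fun u hu => hw2 u ?_⟩
    · have : (s ++ [a]).get ⟨i, hi⟩ = s.get ⟨i, hlt⟩ := by
        simp [List.get_eq_getElem, List.getElem_append_left hlt]
      rwa [this]
    · rwa [List.take_append_of_le_length (le_of_lt hlt)] at hu
  · have hlen : (s ++ [a]).length = s.length + 1 := by simp
    have hieq : i = s.length := by omega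
    subst hieq
    refine ⟨w, ?_, fun u hu => h u ?_⟩
    · have : (s ++ [a]).get ⟨s.length, hi⟩ = a := by
        simp [List.get_eq_getElem]
      rwa [this]
    · rwa [List.take_left] at hu


lemma legal_extend (hiso : NoIsolatedVerts G) {s : List V} (hs : LegalSeq G s)
    (hnd : ¬ TotalDomSet G {v | v ∈ s}) : ∃ a, a ∉ s ∧ LegalSeq G (s ++ [a]) := by
  simp only [TotalDomSet, not_forall] at hnd
  obtain ⟨w, hw⟩ := hnd
  push_neg at hw
  obtain ⟨a, ha⟩ := hiso w
  have has : a ∉ s := fun h => hw a h ha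
  exact ⟨a, has, legal_append_singleton hs has ha.symm (fun u hu h => hw u hu (h.symm))⟩

lemma nodup_length_le [Finite V] {s : List V} (h : s.Nodup) : s.length ≤ Nat.card V := by
  classical
  have := Fintype.ofFinite V
  rw [← List.toFinset_card_of_nodup h, Nat.card_eq_fintype_card]
  exact Finset.card_le_card (Finset.subset_univ _)

lemma exists_tds_extension [Finite V] (hiso : NoIsolatedVerts G) :
    ∀ n (s : List V), Nat.card V - s.length ≤ n → LegalSeq G s →
      ∃ t, TotalDomSeq G t ∧ s <+: t := by
  intro n
  induction n with
  | zero =>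
    intro s hn hs
    by_cases hd : TotalDomSet G {v | v ∈ s}
    · exact ⟨s, ⟨hs, hd⟩, List.prefix_refl s⟩
    · obtain ⟨a, ha, hsa⟩ := legal_extend hiso hs hd
      have := nodup_length_le hsa.1
      simp at this; omega
  | succ n ih =>
    intro s hn hs
    by_cases hd : TotalDomSet G {v | v ∈ s}
    · exact ⟨s, ⟨hs, hd⟩, List.prefix_refl s⟩
    · obtain ⟨a, ha, hsa⟩ := legal_extend hiso hs hd
      obtain ⟨t, ht, hpre⟩ := ih (s ++ [a]) (by simp; omega) hsa
      exact ⟨t, ht, ((s.prefix_append [a]).trans hpre)⟩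


lemma mem_set_ncard {s : List V} (h : s.Nodup) : ({v | v ∈ s} : Set V).ncard = s.length := by
  classical
  have : ({v | v ∈ s} : Set V) = ↑s.toFinset := by ext x; simp
  rw [this, Set.ncard_coe_finset, List.toFinset_card_of_nodup h]

lemma totalDomNum_le {A : Set V} (hA : TotalDomSet G A) : totalDomNum G ≤ A.ncard :=
  Nat.sInf_le ⟨A, hA, rfl⟩

lemma tds_length_eq [Finite V] {k : ℕ} (ht_ : totalDomNum G = k) (hg : grundyTotalDomNum G = k)
    {t : List V} (ht : TotalDomSeq G t) : t.length = k := by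
  have h1 : k ≤ t.length := by
    rw [← ht_, ← mem_set_ncard ht.1.1]
    exact totalDomNum_le ht.2
  have h2 : t.length ≤ k := by
    rw [← hg]
    exact le_csSup ⟨Nat.card V, fun n ⟨s, hs, hn⟩ => hn ▸ nodup_length_le hs.1.1⟩ ⟨t, ht, rfl⟩
  omega


section WSec
variable (G) (u v : V)
local notation "W" => ((closedNbhd G u ∪ closedNbhd G v)ᶜ : Set V)

lemma mem_W_props {x : V} (hx : x ∈ W) :
    ¬ G.Adj u x ∧ ¬ G.Adj v x ∧ x ≠ u ∧ x ≠ v := by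
  simp only [closedNbhd, Set.mem_compl_iff, Set.mem_union, Set.mem_insert_iff,
    mem_neighborSet, not_or] at hx
  tauto

lemma not_mem_W {z : V} (hadj : G.Adj u v) (hz : z ∉ W) : G.Adj z u ∨ G.Adj z v := by
  have hz' : z ∈ closedNbhd G u ∪ closedNbhd G v := by by_contra hc; exact hz hc
  simp only [closedNbhd, Set.mem_union, Set.mem_insert_iff, mem_neighborSet] at hz'
  rcases hz' with (rfl | h) | (rfl | h)
  · exact Or.inr hadj
  · exact Or.inl h.symm
  · exact Or.inl hadj.symm
  · exact Or.inr h.symm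

lemma u_not_mem_W : u ∉ W := fun h => (mem_W_props G u v h).2.2.1 rfl
lemma v_not_mem_W : v ∉ W := fun h => (mem_W_props G u v h).2.2.2 rfl
end WSec

section Lift
variable [Finite V] (G) (u v : V)
local notation "W" => ((closedNbhd G u ∪ closedNbhd G v)ᶜ : Set V)
local notation "H" => G.induce W

lemma lift_legal (hadj : G.Adj u v) (hno : NoIsolatedVerts H) {s : List ↥W}
    (hs : LegalSeq H s) : LegalSeq G (u :: v :: s.map Subtype.val) := by
  have hWadj : ∀ w : ↥W, ¬ G.Adj u ↑w ∧ ¬ G.Adj v ↑w := fun w =>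
    ⟨(mem_W_props G u v w.2).1, (mem_W_props G u v w.2).2.1⟩
  have humem : u ∉ s.map Subtype.val := by
    simp only [List.mem_map, not_exists]
    rintro a ⟨ha, hau⟩
    exact (mem_W_props G u v a.2).2.2.1 hau
  have hvmem : v ∉ s.map Subtype.val := by
    simp only [List.mem_map, not_exists]
    rintro a ⟨ha, hau⟩
    exact (mem_W_props G u v a.2).2.2.2 hau
  constructor
  · refine List.nodup_cons.2 ⟨?_, List.nodup_cons.2 ⟨hvmem, hs.1.map Subtype.val_injective⟩⟩
    simp only [List.mem_cons, not_or]
    exact ⟨hadj.ne, humem⟩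
  · intro i h hpos
    match i, hpos with
    | 1, _ =>
      refine ⟨u, hadj.symm, ?_⟩
      intro x hx
      simp only [List.take_succ_cons, List.take_zero, List.mem_singleton] at hx
      rw [hx]
      exact G.loopless.irrefl u
    | (j+2), _ =>
      have hj : j < s.length := by
        simp only [List.length_cons, List.length_map] at h; omega
      -- witness
      have key : ∃ w : ↥W, G.Adj ↑(s.get ⟨j, hj⟩) ↑w ∧ ∀ q ∈ s.take j, ¬ G.Adj ↑q ↑w := by
        rcases Nat.eq_zero_or_pos j with rfl | hjpos
        · obtain ⟨w, hw⟩ := hno (s.get ⟨0, hj⟩)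
          exact ⟨w, hw, by simp⟩
        · obtain ⟨w, hw1, hw2⟩ := hs.2 j hj hjpos
          exact ⟨w, hw1, hw2⟩
      obtain ⟨w, hw1, hw2⟩ := key
      have hget : (u :: v :: s.map Subtype.val).get ⟨j+2, h⟩ = ↑(s.get ⟨j, hj⟩) := by
        simp only [List.get_eq_getElem, List.getElem_cons_succ, List.getElem_map]
      refine ⟨↑w, by rw [hget]; exact hw1, ?_⟩
      intro x hx
      have : x ∈ u :: v :: (s.take j).map Subtype.val := by
        simpa [List.take_succ_cons, List.map_take] using hx
      simp only [List.mem_cons] at this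
      rcases this with rfl | rfl | hmem
      · exact (hWadj w).1
      · exact (hWadj w).2
      · simp only [List.mem_map] at hmem
        obtain ⟨q, hq, rfl⟩ := hmem
        exact hw2 q hq

lemma lift_tds (hadj : G.Adj u v) (hno : NoIsolatedVerts H) {s : List ↥W}
    (hs : TotalDomSeq H s) : TotalDomSeq G (u :: v :: s.map Subtype.val) := by
  refine ⟨lift_legal G u v hadj hno hs.1, ?_⟩
  intro z
  by_cases hz : z ∈ W
  · obtain ⟨a, ha, hA⟩ := hs.2 ⟨z, hz⟩
    refine ⟨↑a, ?_, hA⟩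
    simp only [Set.mem_setOf_eq, List.mem_cons, List.mem_map]
    exact Or.inr (Or.inr ⟨a, ha, rfl⟩)
  · rcases not_mem_W G u v hadj hz with h | h
    · exact ⟨u, by simp, h⟩
    · refine ⟨v, ?_, h⟩
      simp

lemma lift_tdset (hadj : G.Adj u v) {A : Set ↥W} (hA : TotalDomSet H A) :
    TotalDomSet G (Subtype.val '' A ∪ {u, v}) ∧
      (Subtype.val '' A ∪ {u, v}).ncard = A.ncard + 2 := by
  constructor
  · intro z
    by_cases hz : z ∈ W
    · obtain ⟨a, ha, h⟩ := hA ⟨z, hz⟩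
      exact ⟨↑a, Or.inl ⟨a, ha, rfl⟩, h⟩
    · rcases not_mem_W G u v hadj hz with h | h
      · exact ⟨u, Or.inr (by simp), h⟩
      · exact ⟨v, Or.inr (by simp), h⟩
  · have hdisj : Disjoint (Subtype.val '' A) ({u, v} : Set V) := by
      rw [Set.disjoint_right]
      intro x h1 hximg
      obtain ⟨a, ha, hav⟩ := hximg
      simp only [Set.mem_insert_iff, Set.mem_singleton_iff] at h1
      rcases h1 with h1 | h1
      · exact (mem_W_props G u v a.2).2.2.1 (hav.trans h1)
      · exact (mem_W_props G u v a.2).2.2.2 (hav.trans h1)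
    rw [Set.ncard_union_eq hdisj (Set.toFinite _) (Set.toFinite _),
      Set.ncard_image_of_injective _ Subtype.val_injective, Set.ncard_pair hadj.ne]
end Lift

section Main
variable [Finite V]

theorem main_aux (G : SimpleGraph V) (k : ℕ) (hk : 3 ≤ k)
    (hiso : NoIsolatedVerts G) (ht : totalDomNum G = k) (hg : grundyTotalDomNum G = k)
    (u v : V) (hadj : G.Adj u v) :
    Nonempty ((closedNbhd G u ∪ closedNbhd G v)ᶜ : Set V) ∧
    NoIsolatedVerts (G.induce ((closedNbhd G u ∪ closedNbhd G v)ᶜ)) ∧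
    (totalDomNum (G.induce ((closedNbhd G u ∪ closedNbhd G v)ᶜ)) = k - 2 ∧
     grundyTotalDomNum (G.induce ((closedNbhd G u ∪ closedNbhd G v)ᶜ)) = k - 2) := by
  have hlen : ∀ t : List V, TotalDomSeq G t → t.length = k := fun t h => tds_length_eq ht hg h
  have hA : Nonempty ((closedNbhd G u ∪ closedNbhd G v)ᶜ : Set V) := by
    by_contra hne
    have htd : TotalDomSet G {u, v} := by
      intro z
      have hz : z ∉ ((closedNbhd G u ∪ closedNbhd G v)ᶜ : Set V) := fun hz => hne ⟨⟨z, hz⟩⟩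
      rcases not_mem_W G u v hadj hz with h | h
      · exact ⟨u, by simp, h⟩
      · exact ⟨v, by simp, h⟩
    have h2 : totalDomNum G ≤ 2 := by
      have := totalDomNum_le htd
      rwa [Set.ncard_pair hadj.ne] at this
    omega
  have hB : NoIsolatedVerts (G.induce ((closedNbhd G u ∪ closedNbhd G v)ᶜ : Set V)) := by
    intro x
    by_contra hx
    push_neg at hx
    have hprops := mem_W_props G u v x.2
    have hleg : LegalSeq G [↑x, v, u] := by
      constructor
      · refine List.nodup_cons.2 ⟨?_, List.nodup_cons.2 ⟨?_, List.nodup_singleton u⟩⟩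
        · simp only [List.mem_cons, List.mem_singleton, List.not_mem_nil, not_or]
          exact ⟨hprops.2.2.2, hprops.2.2.1, not_false⟩
        · simp only [List.mem_singleton]
          exact hadj.ne'
      · intro i h hpos
        match i, h, hpos with
        | 1, h, _ =>
          refine ⟨u, hadj.symm, ?_⟩
          intro p hp
          simp only [List.take_succ_cons, List.take_zero, List.mem_singleton] at hp
          rw [hp]
          exact fun hc => hprops.1 hc.symm
        | 2, h, _ =>
          refine ⟨v, hadj, ?_⟩
          intro p hp
          simp only [List.take_succ_cons, List.take_zero, List.mem_cons,
            List.mem_singleton, List.not_mem_nil, or_false] at hp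
          rcases hp with h1 | h1 <;> rw [h1]
          · exact fun hc => hprops.2.1 hc.symm
          · exact G.loopless.irrefl v
    obtain ⟨t, htds, hpre⟩ :=
      exists_tds_extension hiso (Nat.card V) [↑x, v, u] (Nat.sub_le _ _) hleg
    obtain ⟨r, rfl⟩ := hpre
    have hklen : ([↑x, v, u] ++ r).length = k := hlen _ htds
    have htail : TotalDomSeq G ([v, u] ++ r) := by
      constructor
      · exact legal_tail htds.1
      · intro z
        obtain ⟨a, ha, hAz⟩ := htds.2 z
        simp only [Set.mem_setOf_eq, List.cons_append, List.mem_cons] at ha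
        by_cases hax : a = ↑x
        · rw [hax] at hAz
          have hzW : z ∉ ((closedNbhd G u ∪ closedNbhd G v)ᶜ : Set V) := fun hzW => hx ⟨z, hzW⟩ hAz.symm
          rcases not_mem_W G u v hadj hzW with h | h
          · exact ⟨u, by simp, h⟩
          · exact ⟨v, by simp, h⟩
        · refine ⟨a, ?_, hAz⟩
          simp only [Set.mem_setOf_eq, List.cons_append, List.mem_cons]
          rcases ha with h1 | h1 | h1 | h1
          · exact absurd h1 hax
          · exact Or.inl h1
          · exact Or.inr (Or.inl h1)
          · exact Or.inr (Or.inr h1)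
    have hklen2 : ([v, u] ++ r).length = k := hlen _ htail
    simp only [List.length_append, List.length_cons, List.length_nil] at hklen hklen2
    omega
  refine ⟨hA, hB, ?_⟩
  obtain ⟨t₀, ht₀, -⟩ :=
    exists_tds_extension (G := G.induce ((closedNbhd G u ∪ closedNbhd G v)ᶜ : Set V)) hB (Nat.card ↥((closedNbhd G u ∪ closedNbhd G v)ᶜ : Set V)) [] (Nat.sub_le _ _) legal_nil
  have ht₀len : t₀.length = k - 2 := by
    have h1 := hlen _ (lift_tds G u v hadj hB ht₀)
    simp only [List.length_cons, List.length_map] at h1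
    omega
  have ht₀card : ({x | x ∈ t₀} : Set ↥((closedNbhd G u ∪ closedNbhd G v)ᶜ : Set V)).ncard = k - 2 := by
    rw [mem_set_ncard ht₀.1.1, ht₀len]
  constructor
  · apply le_antisymm
    · exact ht₀card ▸ totalDomNum_le ht₀.2
    · refine le_csInf ⟨k - 2, ⟨{x | x ∈ t₀}, ht₀.2, ht₀card⟩⟩ ?_
      rintro n ⟨A, hA', rfl⟩
      obtain ⟨htdA, hcard⟩ := lift_tdset G u v hadj hA'
      have hle := totalDomNum_le htdA
      rw [hcard, ht] at hle
      omega
  · apply le_antisymm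
    · refine csSup_le ⟨k - 2, ⟨t₀, ht₀, ht₀len⟩⟩ ?_
      rintro n ⟨s, hs, rfl⟩
      have h1 := hlen _ (lift_tds G u v hadj hB hs)
      simp only [List.length_cons, List.length_map] at h1
      omega
    · exact le_csSup ⟨Nat.card ↥((closedNbhd G u ∪ closedNbhd G v)ᶜ : Set V), fun n ⟨s, hs, hn⟩ => hn ▸ nodup_length_le hs.1.1⟩
        ⟨t₀, ht₀, ht₀len⟩
end Main

end Stmt1Aux

/-- If `uv` is an edge of a total `k`-uniform graph `G` with no isolated vertices (`k ≥ 3`),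
then the subgraph induced by `V(G) \ (N[u] ∪ N[v])` is nonempty, has no isolated vertices,
and is total `(k-2)`-uniform. -/
theorem stmt_1 {V : Type*} [Finite V] (G : SimpleGraph V) (k : ℕ) (hk : 3 ≤ k)
    (hiso : NoIsolatedVerts G) (huni : TotalKUniform G k)
    (u v : V) (hadj : G.Adj u v) :
    Nonempty ((closedNbhd G u ∪ closedNbhd G v)ᶜ : Set V) ∧
    NoIsolatedVerts (G.induce ((closedNbhd G u ∪ closedNbhd G v)ᶜ)) ∧
    TotalKUniform (G.induce ((closedNbhd G u ∪ closedNbhd G v)ᶜ)) (k - 2) := by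
  obtain ⟨h1, h2, h3, h4⟩ := Stmt1Aux.main_aux G k hk hiso huni.1 huni.2 u v hadj
  exact ⟨h1, h2, h3, h4⟩
end

section
/- For every odd positive integer k, there does not exist a total k-uniform graph; that is, no finite simple graph G without isolated vertices satisfies γ_t(G) = γ_gr^t(G) = k with k odd. -/
open SimpleGraph

section Aux

variable {V : Type*} {G : SimpleGraph V}

lemma legal_single (a : V) : LegalSeq G [a] := by
  refine ⟨List.nodup_singleton a, ?_⟩
  intro i h hi
  simp only [List.length_singleton] at h
  omega

lemma legal_append_one {s : List V} {x : V} (hs : LegalSeq G s) (hx : x ∉ s)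
    (w : V) (hadj : G.Adj x w) (hnew : ∀ u ∈ s, ¬ G.Adj u w) :
    LegalSeq G (s ++ [x]) := by
  refine ⟨?_, ?_⟩
  · simp [List.nodup_append, hs.1, hx]
    intro a ha h; subst h; exact hx ha
  · intro i h hi
    rcases lt_or_ge i s.length with hil | hge
    · obtain ⟨w', hw1, hw2⟩ := hs.2 i hil hi
      refine ⟨w', ?_, ?_⟩
      · have hg : (s ++ [x]).get ⟨i, h⟩ = s.get ⟨i, hil⟩ := by
          simp [List.get_eq_getElem, List.getElem_append_left hil]
        rwa [hg]
      · intro u hu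
        rw [List.take_append_of_le_length (le_of_lt hil)] at hu
        exact hw2 u hu
    · have hieq : i = s.length := by
        have : i < s.length + 1 := by simpa using h
        omega
      subst hieq
      refine ⟨w, ?_, ?_⟩
      · have hg : (s ++ [x]).get ⟨s.length, h⟩ = x := by
          simp [List.get_eq_getElem]
        rwa [hg]
      · intro u hu
        rw [List.take_left] at hu
        exact hnew u hu

lemma legal_prepend {s : List V} {v : V} (hnd : s.Nodup) (hv : v ∉ s)
    (H : ∀ (i : ℕ) (h : i < s.length), ∃ w : V, G.Adj (s.get ⟨i, h⟩) w ∧ ¬ G.Adj v w ∧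
      ∀ u ∈ s.take i, ¬ G.Adj u w) :
    LegalSeq G (v :: s) := by
  refine ⟨List.nodup_cons.mpr ⟨hv, hnd⟩, ?_⟩
  intro i h hi
  obtain ⟨j, rfl⟩ : ∃ j, i = j + 1 := ⟨i - 1, by omega⟩
  have hj : j < s.length := by simpa using h
  obtain ⟨w, hw1, hw2, hw3⟩ := H j hj
  refine ⟨w, ?_, ?_⟩
  · have hg : (v :: s).get ⟨j + 1, h⟩ = s.get ⟨j, hj⟩ := by
      simp [List.get_eq_getElem]
    rwa [hg]
  · intro u hu
    rw [List.take_succ_cons] at hu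
    rcases List.mem_cons.mp hu with rfl | hu'
    · exact hw2
    · exact hw3 u hu'

lemma td_no_ext {s : List V} (htd : TotalDomSet G {v | v ∈ s}) (x : V) :
    ¬ LegalSeq G (s ++ [x]) := by
  intro hleg
  have hpos : 0 < s.length := by
    obtain ⟨t, ht, _⟩ := htd x
    exact List.length_pos_iff.mpr (List.ne_nil_of_mem ht)
  have hlt : s.length < (s ++ [x]).length := by simp
  obtain ⟨w, hw1, hw2⟩ := hleg.2 s.length hlt hpos
  rw [List.take_left] at hw2
  obtain ⟨t, ht, hadj⟩ := htd w
  exact hw2 t ht hadj.symm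

lemma maximal_td (hiso : NoIsolatedVerts G) {s : List V} (hs : LegalSeq G s)
    (hmax : ∀ x, ¬ LegalSeq G (s ++ [x])) : TotalDomSet G {v | v ∈ s} := by
  intro v
  by_contra hc
  push_neg at hc
  obtain ⟨w, hw⟩ := hiso v
  have hwns : w ∉ s := fun hmem => hc w hmem hw
  exact hmax w (legal_append_one hs hwns v hw.symm (fun u hu hadj => hc u hu hadj.symm))

lemma exists_max_ext [Finite V] :
    ∀ (n : ℕ) (s : List V), LegalSeq G s → Nat.card V ≤ s.length + n →
      ∃ u, LegalSeq G (s ++ u) ∧ ∀ x, ¬ LegalSeq G ((s ++ u) ++ [x]) := by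
  intro n
  induction n with
  | zero =>
    intro s hs hcard
    refine ⟨[], by simpa using hs, ?_⟩
    intro x hleg
    have hnd := hleg.1
    have : Fintype V := Fintype.ofFinite V
    have hle : ((s ++ []) ++ [x]).length ≤ Fintype.card V := hnd.length_le_card
    rw [Nat.card_eq_fintype_card] at hcard
    simp at hle
    omega
  | succ n IH =>
    intro s hs hcard
    by_cases hex : ∃ x, LegalSeq G (s ++ [x])
    · obtain ⟨x, hx⟩ := hex
      obtain ⟨u, hu1, hu2⟩ := IH (s ++ [x]) hx (by simp; omega)
      have heq : s ++ x :: u = (s ++ [x]) ++ u := by simp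
      refine ⟨x :: u, ?_, ?_⟩
      · rw [heq]; exact hu1
      · intro y; rw [heq]; exact hu2 y
    · push_neg at hex
      exact ⟨[], by simpa using hs, by simpa using hex⟩

lemma main_lemma (k : ℕ) : Odd k → ∀ (V : Type u) (G : SimpleGraph V), Finite V →
    Nonempty V → NoIsolatedVerts G →
    (∀ s : List V, LegalSeq G s → (∀ x, ¬ LegalSeq G (s ++ [x])) → s.length = k) → False := by
  induction k using Nat.strong_induction_on with
  | _ k IH =>
  intro hodd V G hfin hne hiso hmax
  haveI := hfin
  obtain ⟨a⟩ := hne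
  obtain ⟨b, hab⟩ := hiso a
  have hlegab : LegalSeq G [a, b] := by
    have h1 : LegalSeq G [a] := legal_single a
    have h2 := legal_append_one h1 (by simp [hab.ne']) a hab.symm
      (fun u hu => by
        simp at hu; subst hu; exact fun hc => G.irrefl hc)
    simpa using h2
  obtain ⟨u0, hu0, hu0max⟩ := exists_max_ext (Nat.card V) [a, b] hlegab (by omega)
  have hk0 : ([a, b] ++ u0).length = k := hmax _ hu0 hu0max
  have hk0' : u0.length + 2 = k := by simpa using hk0
  by_cases hRe : ∀ v : V, G.Adj a v ∨ G.Adj b v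
  · have htd : TotalDomSet G {v | v ∈ [a, b]} := by
      intro v
      rcases hRe v with h | h
      · exact ⟨a, by simp, h.symm⟩
      · exact ⟨b, by simp, h.symm⟩
    have h2 : ([a, b] : List V).length = k := hmax _ hlegab (td_no_ext htd)
    simp at h2
    obtain ⟨m, hm⟩ := hodd
    omega
  push_neg at hRe
  obtain ⟨r0, hr0a, hr0b⟩ := hRe
  by_cases hgood : ∀ v : V, ¬ G.Adj a v → ¬ G.Adj b v →
      ∃ w, ¬ G.Adj a w ∧ ¬ G.Adj b w ∧ G.Adj v w
  · -- good case: induced graph on R is total (k-2)-uniform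
    set R : Set V := {v | ¬ G.Adj a v ∧ ¬ G.Adj b v} with hRdef
    have hr0R : r0 ∈ R := ⟨hr0a, hr0b⟩
    have hRne : Nonempty ↥R := ⟨⟨r0, hr0R⟩⟩
    let G' : SimpleGraph ↥R := G.comap Subtype.val
    have hiso' : NoIsolatedVerts G' := by
      rintro ⟨v, hv1, hv2⟩
      obtain ⟨w, hw1, hw2, hw3⟩ := hgood v hv1 hv2
      exact ⟨⟨w, hw1, hw2⟩, hw3⟩
    have hmax' : ∀ s' : List ↥R, LegalSeq G' s' → (∀ x, ¬ LegalSeq G' (s' ++ [x])) →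
        s'.length = k - 2 := by
      intro s' hs' hs'max
      set l := s'.map Subtype.val with hl
      have hllen : l.length = s'.length := by simp [hl]
      have Hw : ∀ (i : ℕ) (h : i < l.length), ∃ w : V, w ∈ R ∧
          G.Adj (l.get ⟨i, h⟩) w ∧ ∀ u ∈ l.take i, ¬ G.Adj u w := by
        intro i h
        have hi' : i < s'.length := by omega
        have hgeteq : l.get ⟨i, h⟩ = (s'.get ⟨i, hi'⟩ : ↥R).val := by
          simp only [hl, List.get_eq_getElem, List.getElem_map]
        rcases Nat.eq_zero_or_pos i with h0 | hpos
        · subst h0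
          obtain ⟨w', hw'⟩ := hiso' (s'.get ⟨0, hi'⟩)
          refine ⟨w'.val, w'.2, ?_, by simp⟩
          rw [hgeteq]; exact hw'
        · obtain ⟨w', hw1, hw2⟩ := hs'.2 i hi' hpos
          refine ⟨w'.val, w'.2, ?_, ?_⟩
          · rw [hgeteq]; exact hw1
          · intro u hu
            rw [hl, ← List.map_take] at hu
            obtain ⟨u', hu', rfl⟩ := List.mem_map.mp hu
            exact hw2 u' hu'
      have hbR : b ∉ R := fun hb => hb.1 hab
      have haR : a ∉ R := fun ha => ha.2 hab.symm
      have hbl : b ∉ l := by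
        intro hb
        obtain ⟨u', _, heq⟩ := List.mem_map.mp hb
        exact hbR (heq ▸ u'.2)
      have hal : a ∉ l := by
        intro ha
        obtain ⟨u', _, heq⟩ := List.mem_map.mp ha
        exact haR (heq ▸ u'.2)
      have hndl : l.Nodup := hs'.1.map Subtype.val_injective
      have hlegbl : LegalSeq G (b :: l) := by
        refine legal_prepend hndl hbl ?_
        intro i h
        obtain ⟨w, hwR, hw1, hw2⟩ := Hw i h
        exact ⟨w, hw1, hwR.2, hw2⟩
      have hlegabl : LegalSeq G (a :: b :: l) := by
        refine legal_prepend hlegbl.1 ?_ ?_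
        · simp [hab.ne, hal]
        · intro i h
          rcases Nat.eq_zero_or_pos i with h0 | hpos
          · subst h0
            refine ⟨a, ?_, fun hc => G.irrefl hc, by simp⟩
            simp [List.get_eq_getElem]
            exact hab.symm
          · obtain ⟨j, rfl⟩ : ∃ j, i = j + 1 := ⟨i - 1, by omega⟩
            have hj : j < l.length := by simpa using h
            obtain ⟨w, hwR, hw1, hw2⟩ := Hw j hj
            have hg : (b :: l).get ⟨j + 1, h⟩ = l.get ⟨j, hj⟩ := by
              simp [List.get_eq_getElem]
            rw [hg]
            refine ⟨w, hw1, hwR.1, ?_⟩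
            intro u hu
            rw [List.take_succ_cons] at hu
            rcases List.mem_cons.mp hu with rfl | hu'
            · exact hwR.2
            · exact hw2 u hu'
      have htd' : TotalDomSet G' {v | v ∈ s'} := maximal_td hiso' hs' hs'max
      have htd : TotalDomSet G {v | v ∈ a :: b :: l} := by
        intro v
        by_cases hva : G.Adj a v
        · exact ⟨a, by simp, hva.symm⟩
        by_cases hvb : G.Adj b v
        · exact ⟨b, by simp, hvb.symm⟩
        obtain ⟨t', ht', hadjt⟩ := htd' ⟨v, hva, hvb⟩
        refine ⟨t'.val, ?_, hadjt⟩
        simp only [List.mem_cons, Set.mem_setOf_eq]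
        right; right
        exact List.mem_map.mpr ⟨t', ht', rfl⟩
      have hlen := hmax _ hlegabl (td_no_ext htd)
      simp only [List.length_cons] at hlen
      omega
    obtain ⟨m, hm⟩ := hodd
    have hodd' : Odd (k - 2) := ⟨m - 1, by omega⟩
    exact IH (k - 2) (by omega) hodd' ↥R G' inferInstance hRne hiso' hmax'
  · -- bad case: there is r outside N(a) ∪ N(b) all of whose neighbors are inside
    push_neg at hgood
    obtain ⟨r, hra, hrb, hbad⟩ := hgood
    have hu0' : LegalSeq G (a :: b :: u0) := hu0
    have hgw : ∀ (i : ℕ) (h : i < (a :: b :: u0).length), 2 ≤ i →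
        ∃ w : V, G.Adj ((a :: b :: u0).get ⟨i, h⟩) w ∧ ¬ G.Adj a w ∧ ¬ G.Adj b w ∧
          ∀ u ∈ (a :: b :: u0).take i, ¬ G.Adj u w := by
      intro i h h2
      obtain ⟨w, hw1, hw2⟩ := hu0'.2 i h (by omega)
      obtain ⟨j, rfl⟩ : ∃ j, i = j + 2 := ⟨i - 2, by omega⟩
      have htake : (a :: b :: u0).take (j + 2) = a :: b :: u0.take j := by
        simp [List.take_succ_cons]
      refine ⟨w, hw1, ?_, ?_, hw2⟩
      · exact hw2 a (by rw [htake]; simp)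
      · exact hw2 b (by rw [htake]; simp)
    have hrt : r ∉ a :: b :: u0 := by
      intro hmem
      rcases List.mem_cons.mp hmem with rfl | hmem
      · exact hrb hab.symm
      rcases List.mem_cons.mp hmem with rfl | hmem
      · exact hra hab
      obtain ⟨⟨j, hj⟩, hjr⟩ := List.mem_iff_get.mp hmem
      have hj2 : j + 2 < (a :: b :: u0).length := by simpa using hj
      obtain ⟨w, hw1, hwa, hwb, _⟩ := hgw (j + 2) hj2 (by omega)
      have hg : (a :: b :: u0).get ⟨j + 2, hj2⟩ = r := by
        rw [← hjr]; simp [List.get_eq_getElem]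
      rw [hg] at hw1
      exact hbad w hwa hwb hw1
    have hlegr : LegalSeq G (r :: a :: b :: u0) := by
      refine legal_prepend hu0'.1 hrt ?_
      intro i h
      match i, h with
      | 0, h =>
        exact ⟨b, hab, fun hc => hrb hc.symm, by simp⟩
      | 1, h =>
        refine ⟨a, hab.symm, fun hc => hra hc.symm, ?_⟩
        intro u hu
        simp only [List.take_succ_cons, List.take_zero] at hu
        simp only [List.mem_singleton] at hu
        subst hu
        exact fun hc => G.irrefl hc
      | (j+2), h =>
        obtain ⟨w, hw1, hwa, hwb, hw2⟩ := hgw (j + 2) h (by omega)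
        exact ⟨w, hw1, fun hc => hbad w hwa hwb hc, hw2⟩
    have htdt : TotalDomSet G {v | v ∈ a :: b :: u0} := maximal_td hiso hu0' hu0max
    have htdrt : TotalDomSet G {v | v ∈ r :: a :: b :: u0} := by
      intro v
      obtain ⟨t', ht', hadj⟩ := htdt v
      exact ⟨t', List.mem_cons_of_mem r ht', hadj⟩
    have hlen := hmax _ hlegr (td_no_ext htdrt)
    simp only [List.length_cons] at hlen
    omega

end Aux

/-- There is no total `k`-uniform graph when `k` is odd: no finite simple graph without
isolated vertices satisfies `γ_t(G) = γ_gr^t(G) = k` for odd `k`. -/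
theorem stmt_2 {V : Type*} [Finite V] (G : SimpleGraph V) (k : ℕ) (hk : Odd k)
    (hiso : NoIsolatedVerts G) : ¬ TotalKUniform G k := by
  rintro ⟨ht, hg⟩
  cases isEmpty_or_nonempty V with
  | inl hVempty =>
    have h0 : (0 : ℕ) ∈ {n | ∃ A : Set V, TotalDomSet G A ∧ A.ncard = n} :=
      ⟨∅, fun v => isEmptyElim v, by simp⟩
    have hle : totalDomNum G ≤ 0 := Nat.sInf_le h0
    rw [ht] at hle
    obtain ⟨m, hm⟩ := hk
    omega
  | inr hne =>
    refine main_lemma k hk V G ‹Finite V› hne hiso ?_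
    intro s hs hsmax
    have htd : TotalDomSet G {v | v ∈ s} := maximal_td hiso hs hsmax
    have hcard : ({v | v ∈ s} : Set V).ncard = s.length := by
      classical
      have h1 : ({v | v ∈ s} : Set V) = ↑s.toFinset := by ext v; simp
      rw [h1, Set.ncard_coe_finset, List.toFinset_card_of_nodup hs.1]
    have h1 : totalDomNum G ≤ s.length := Nat.sInf_le ⟨{v | v ∈ s}, htd, hcard⟩
    have hbdd : BddAbove {n | ∃ s : List V, TotalDomSeq G s ∧ s.length = n} := by
      have : Fintype V := Fintype.ofFinite V
      refine ⟨Fintype.card V, ?_⟩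
      rintro n ⟨s', ⟨⟨hnd, _⟩, _⟩, rfl⟩
      exact hnd.length_le_card
    have h2 : s.length ≤ grundyTotalDomNum G := le_csSup hbdd ⟨s, ⟨hs, htd⟩, rfl⟩
    rw [ht] at h1
    rw [hg] at h2
    omega
end

section
/- Let G be a finite simple graph with no isolated vertices and let u and v be false twins in G. Then the graph G − u obtained by deleting u has no isolated vertices, and γ_t(G − u) = γ_t(G) and γ_gr^t(G − u) = γ_gr^t(G). -/
open SimpleGraph

section AuxLemmas

variable {V : Type*}

/-- In a legal sequence, two false twins cannot both appear. -/
lemma legal_no_twins (G : SimpleGraph V) (u v : V)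
    (htwin : G.neighborSet u = G.neighborSet v)
    (s : List V) (hs : LegalSeq G s) {i j : ℕ} (hi : i < s.length) (hj : j < s.length)
    (hij : i < j) (hgi : s.get ⟨i, hi⟩ = u) (hgj : s.get ⟨j, hj⟩ = v) : False := by
  obtain ⟨w, hw1, hw2⟩ := hs.2 j hj (Nat.lt_of_le_of_lt (Nat.zero_le i) hij)
  have hilen : i < (s.take j).length := by simp; omega
  have hmem : s.get ⟨i, hi⟩ ∈ s.take j := by
    have h2 : (s.take j)[i]'hilen ∈ s.take j := List.getElem_mem hilen
    rw [List.getElem_take] at h2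
    exact h2
  have hnadj := hw2 _ hmem
  rw [hgi] at hnadj
  rw [hgj] at hw1
  apply hnadj
  have hwv : w ∈ G.neighborSet v := hw1
  rw [← htwin] at hwv
  exact hwv

/-- Transferring legal sequences along a map that respects adjacency. -/
lemma legal_map {W : Type*} {G : SimpleGraph V} {H : SimpleGraph W}
    (g : V → W) (g' : V → W) (s : List V)
    (hinj : ∀ x ∈ s, ∀ y ∈ s, g x = g y → x = y)
    (hadj : ∀ x ∈ s, ∀ w : V, (H.Adj (g x) (g' w) ↔ G.Adj x w))
    (hs : LegalSeq G s) : LegalSeq H (s.map g) := by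
  refine ⟨hs.1.map_on hinj, ?_⟩
  intro i h hpos
  have hi : i < s.length := by simpa using h
  obtain ⟨w, hw1, hw2⟩ := hs.2 i hi hpos
  refine ⟨g' w, ?_, ?_⟩
  · have hget : (s.map g).get ⟨i, h⟩ = g (s.get ⟨i, hi⟩) := by
      simp [List.get_eq_getElem]
    rw [hget]
    exact (hadj _ (List.get_mem s ⟨i, hi⟩) w).mpr hw1
  · intro z hz
    rw [← List.map_take] at hz
    obtain ⟨x, hx, rfl⟩ := List.mem_map.mp hz
    have hxs : x ∈ s := List.mem_of_mem_take hx
    exact fun hc => hw2 x hx ((hadj x hxs w).mp hc)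

end AuxLemmas

/-- If `u` and `v` are false twins in a graph `G` with no isolated vertices, then `G - u`
has no isolated vertices and has the same total domination number and the same Grundy total
domination number as `G`. -/
theorem stmt_4 {V : Type*} [Finite V] (G : SimpleGraph V) (hiso : NoIsolatedVerts G)
    (u v : V) (huv : u ≠ v) (htwin : G.neighborSet u = G.neighborSet v) :
    NoIsolatedVerts (G.induce {w | w ≠ u}) ∧
    totalDomNum (G.induce {w | w ≠ u}) = totalDomNum G ∧
    grundyTotalDomNum (G.induce {w | w ≠ u}) = grundyTotalDomNum G := by
  classical
  have hvu : v ≠ u := huv.symm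
  -- twin adjacency facts
  have htw : ∀ x, G.Adj x u ↔ G.Adj x v := by
    intro x
    constructor <;> intro h
    · have hx : x ∈ G.neighborSet u := h.symm
      rw [htwin] at hx
      exact hx.symm
    · have hx : x ∈ G.neighborSet v := h.symm
      rw [← htwin] at hx
      exact hx.symm
  -- the swap map
  set f : V → V := fun x => if x = u then v else x with hf
  have hfne : ∀ x, f x ≠ u := by
    intro x
    by_cases hx : x = u <;> simp [hf, hx, hvu]
  have hfid : ∀ x, x ≠ u → f x = x := by
    intro x hx; simp [hf, hx]
  have hAdjf : ∀ x y, G.Adj (f x) (f y) ↔ G.Adj x y := by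
    intro x y
    by_cases hx : x = u <;> by_cases hy : y = u
    · rw [hx, hy]
      simp only [hf, if_pos rfl]
      exact iff_of_false (G.irrefl) (G.irrefl)
    · rw [hx]
      simp only [hf, if_pos rfl, if_neg hy]
      rw [G.adj_comm v y, G.adj_comm u y]
      exact (htw y).symm
    · rw [hy]
      simp only [hf, if_pos rfl, if_neg hx]
      exact (htw x).symm
    · simp [hf, hx, hy]
  have hAdjfr : ∀ x y, x ≠ u → (G.Adj x (f y) ↔ G.Adj x y) := by
    intro x y _
    by_cases hy : y = u
    · rw [hy]
      simp only [hf, if_pos rfl]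
      exact (htw x).symm
    · rw [hfid y hy]
  -- Part 1: no isolated vertices
  have part1 : NoIsolatedVerts (G.induce {w | w ≠ u}) := by
    rintro ⟨x, hx⟩
    obtain ⟨y, hy⟩ := hiso x
    refine ⟨⟨f y, hfne y⟩, ?_⟩
    show G.Adj x (f y)
    exact (hAdjfr x y hx).mpr hy
  -- Part 2: total domination number
  have toG' : ∀ A : Set V, TotalDomSet G A →
      ∃ A' : Set {w : V | w ≠ u}, TotalDomSet (G.induce {w | w ≠ u}) A' ∧ A'.ncard ≤ A.ncard := by
    intro A hA
    refine ⟨Subtype.val ⁻¹' (f '' A), ?_, ?_⟩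
    · rintro ⟨x, hx⟩
      obtain ⟨b, hb, hab⟩ := hA x
      refine ⟨⟨f b, hfne b⟩, ⟨b, hb, rfl⟩, ?_⟩
      show G.Adj x (f b)
      exact (hAdjfr x b hx).mpr hab
    · have hsub : f '' A ⊆ Set.range (Subtype.val : {w : V | w ≠ u} → V) := by
        rintro x ⟨a, _, rfl⟩
        rw [Subtype.range_coe_subtype]
        exact hfne a
      have h1 : Subtype.val '' (Subtype.val ⁻¹' (f '' A)) = f '' A :=
        Set.image_preimage_eq_of_subset hsub
      calc (Subtype.val ⁻¹' (f '' A)).ncard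
          = (Subtype.val '' (Subtype.val ⁻¹' (f '' A))).ncard :=
            (Set.ncard_image_of_injective _ Subtype.val_injective).symm
        _ = (f '' A).ncard := by rw [h1]
        _ ≤ A.ncard := Set.ncard_image_le A.toFinite
  have toG : ∀ B : Set {w : V | w ≠ u}, TotalDomSet (G.induce {w | w ≠ u}) B →
      TotalDomSet G (Subtype.val '' B) ∧ (Subtype.val '' B).ncard = B.ncard := by
    intro B hB
    constructor
    · intro x
      by_cases hx : x = u
      · obtain ⟨a, ha, hva⟩ := hB ⟨v, hvu⟩
        refine ⟨a.val, ⟨a, ha, rfl⟩, ?_⟩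
        have hadj : G.Adj v a.val := hva
        subst hx
        exact ((htw a.val).mpr hadj.symm).symm
      · obtain ⟨a, ha, hxa⟩ := hB ⟨x, hx⟩
        exact ⟨a.val, ⟨a, ha, rfl⟩, hxa⟩
    · exact Set.ncard_image_of_injective _ Subtype.val_injective
  have part2 : totalDomNum (G.induce {w | w ≠ u}) = totalDomNum G := by
    unfold totalDomNum
    have hSne : {n | ∃ A : Set V, TotalDomSet G A ∧ A.ncard = n}.Nonempty := by
      refine ⟨(Set.univ : Set V).ncard, Set.univ, ?_, rfl⟩
      intro x
      obtain ⟨y, hy⟩ := hiso x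
      exact ⟨y, trivial, hy⟩
    obtain ⟨A, hA, hAcard⟩ := Nat.sInf_mem hSne
    obtain ⟨A', hA', hle⟩ := toG' A hA
    have hS'ne : {n | ∃ B : Set {w : V | w ≠ u},
        TotalDomSet (G.induce {w | w ≠ u}) B ∧ B.ncard = n}.Nonempty :=
      ⟨A'.ncard, A', hA', rfl⟩
    obtain ⟨B, hB, hBcard⟩ := Nat.sInf_mem hS'ne
    apply le_antisymm
    · calc sInf {n | ∃ B : Set {w : V | w ≠ u},
            TotalDomSet (G.induce {w | w ≠ u}) B ∧ B.ncard = n}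
          ≤ A'.ncard := Nat.sInf_le ⟨A', hA', rfl⟩
        _ ≤ A.ncard := hle
        _ = _ := hAcard
    · obtain ⟨hTB, hcB⟩ := toG B hB
      calc sInf {n | ∃ A : Set V, TotalDomSet G A ∧ A.ncard = n}
          ≤ (Subtype.val '' B).ncard := Nat.sInf_le ⟨Subtype.val '' B, hTB, rfl⟩
        _ = B.ncard := hcB
        _ = _ := hBcard
  -- Part 3: Grundy total domination number
  have part3 : grundyTotalDomNum (G.induce {w | w ≠ u}) = grundyTotalDomNum G := by
    unfold grundyTotalDomNum
    congr 1
    ext n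
    constructor
    · rintro ⟨s, ⟨hleg, hdom⟩, rfl⟩
      refine ⟨s.map Subtype.val, ⟨?_, ?_⟩, by simp⟩
      · refine legal_map Subtype.val Subtype.val s
          (fun x _ y _ h => Subtype.val_injective h) (fun x _ w => Iff.rfl) hleg
      · intro x
        by_cases hx : x = u
        · obtain ⟨a, ha, hva⟩ := hdom ⟨v, hvu⟩
          refine ⟨a.val, List.mem_map_of_mem ha, ?_⟩
          have hadj : G.Adj v a.val := hva
          subst hx
          exact ((htw a.val).mpr hadj.symm).symm
        · obtain ⟨a, ha, hxa⟩ := hdom ⟨x, hx⟩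
          exact ⟨a.val, List.mem_map_of_mem ha, hxa⟩
    · rintro ⟨s, ⟨hleg, hdom⟩, rfl⟩
      -- u and v cannot both appear in s
      have hnb : u ∈ s → v ∉ s := by
        intro hu hv
        obtain ⟨i, hgi⟩ := List.get_of_mem hu
        obtain ⟨j, hgj⟩ := List.get_of_mem hv
        have hij : (i : ℕ) ≠ (j : ℕ) := by
          intro h
          apply huv
          rw [← hgi, ← hgj]
          congr 1
          exact Fin.ext h
        rcases lt_or_gt_of_ne hij with h | h
        · exact legal_no_twins G u v htwin s hleg i.isLt j.isLt h hgi hgj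
        · exact legal_no_twins G v u htwin.symm s hleg j.isLt i.isLt h hgj hgi
      have hinj : ∀ x ∈ s, ∀ y ∈ s, f x = f y → x = y := by
        intro x hx y hy h
        by_cases hxu : x = u <;> by_cases hyu : y = u
        · rw [hxu, hyu]
        · exfalso
          rw [hxu] at h hx
          rw [hfid y hyu] at h
          simp only [hf, if_pos rfl] at h
          exact hnb hx (h ▸ hy)
        · exfalso
          rw [hyu] at h hy
          rw [hfid x hxu] at h
          simp only [hf, if_pos rfl] at h
          exact hnb hy (h ▸ hx)
        · rwa [hfid x hxu, hfid y hyu] at h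
      set g : V → {w : V | w ≠ u} := fun x => ⟨f x, hfne x⟩ with hg
      refine ⟨s.map g, ⟨?_, ?_⟩, by simp⟩
      · refine legal_map g g s
          (fun x hx y hy h => hinj x hx y hy (congrArg Subtype.val h))
          (fun x _ w => ?_) hleg
        show G.Adj (f x) (f w) ↔ G.Adj x w
        exact hAdjf x w
      · rintro ⟨x, hx⟩
        obtain ⟨b, hb, hxb⟩ := hdom x
        refine ⟨g b, List.mem_map_of_mem hb, ?_⟩
        show G.Adj x (f b)
        exact (hAdjfr x b hx).mpr hxb
  exact ⟨part1, part2, part3⟩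
end

section
/- Let k ≥ 4 be an even integer and let G be a total k-uniform, false twin-free graph with no isolated vertices. Then for every edge uv of G, the subgraph of G induced by V(G) \ (N[u] ∪ N[v]) is false twin-free. -/
open SimpleGraph

/-! ### Auxiliary lemmas -/

/-- Characterization of legality of a sequence obtained by appending one vertex. -/
lemma legal_snoc_iff {V : Type*} (G : SimpleGraph V) (s : List V) (t : V) :
    LegalSeq G (s ++ [t]) ↔ LegalSeq G s ∧ t ∉ s ∧
      (s ≠ [] → ∃ w, G.Adj t w ∧ ∀ z ∈ s, ¬ G.Adj z w) := by
  constructor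
  · rintro ⟨hnd, hleg⟩
    have hnd' : s.Nodup ∧ t ∉ s := by
      simp only [List.nodup_append, List.nodup_cons, List.nodup_nil, List.disjoint_singleton] at hnd
      tauto
    refine ⟨⟨hnd'.1, ?_⟩, hnd'.2, ?_⟩
    · intro i h hi
      obtain ⟨w, hw1, hw2⟩ := hleg i (by simp; omega) hi
      refine ⟨w, ?_, ?_⟩
      · have : (s ++ [t]).get ⟨i, by simp; omega⟩ = s.get ⟨i, h⟩ := by
          simp [List.get_eq_getElem, List.getElem_append_left h]
        rwa [this] at hw1
      · intro z hz
        exact hw2 z (by rw [List.take_append_of_le_length (le_of_lt h)] at hw2 ⊢; exact hz)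
    · intro hne
      have hpos : 0 < s.length := List.length_pos_iff.2 hne
      obtain ⟨w, hw1, hw2⟩ := hleg s.length (by simp) hpos
      have hget : (s ++ [t]).get ⟨s.length, by simp⟩ = t := by
        simp [List.get_eq_getElem]
      rw [hget] at hw1
      refine ⟨w, hw1, ?_⟩
      intro z hz
      exact hw2 z (by rw [List.take_left]; exact hz)
  · rintro ⟨⟨hnd, hleg⟩, ht, hw⟩
    constructor
    · simp only [List.nodup_append, List.nodup_cons, List.nodup_nil, List.disjoint_singleton]
      exact ⟨hnd, by simp, fun a ha b hb hab => ht (by simp at hb; subst hb; subst hab; exact ha)⟩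
    · intro i h hi
      rcases lt_or_eq_of_le (Nat.lt_succ_iff.1 (by simpa using h)) with hlt | heq
      · obtain ⟨w, hw1, hw2⟩ := hleg i hlt hi
        refine ⟨w, ?_, ?_⟩
        · have : (s ++ [t]).get ⟨i, h⟩ = s.get ⟨i, hlt⟩ := by
            simp [List.get_eq_getElem, List.getElem_append_left hlt]
          rwa [this]
        · intro z hz
          rw [List.take_append_of_le_length (le_of_lt hlt)] at hz
          exact hw2 z hz
      · subst heq
        have hne : s ≠ [] := by
          intro hnil; subst hnil; simp at hi
        obtain ⟨w, hw1, hw2⟩ := hw hne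
        refine ⟨w, ?_, ?_⟩
        · have : (s ++ [t]).get ⟨s.length, h⟩ = t := by simp [List.get_eq_getElem]
          rwa [this]
        · intro z hz
          rw [List.take_left] at hz
          exact hw2 z hz

/-- Dropping the first vertex of a legal sequence yields a legal sequence. -/
lemma legal_tail_s5 {V : Type*} (G : SimpleGraph V) {a : V} {s : List V}
    (h : LegalSeq G (a :: s)) : LegalSeq G s := by
  obtain ⟨hnd, hleg⟩ := h
  refine ⟨hnd.of_cons, ?_⟩
  intro i hi hpos
  obtain ⟨w, hw1, hw2⟩ := hleg (i + 1) (by simpa using Nat.succ_lt_succ hi) (Nat.succ_pos i)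
  refine ⟨w, ?_, ?_⟩
  · have : (a :: s).get ⟨i + 1, by simpa using Nat.succ_lt_succ hi⟩ = s.get ⟨i, hi⟩ := by
      simp [List.get_eq_getElem]
    rwa [this] at hw1
  · intro z hz
    refine hw2 z ?_
    rw [List.take_succ_cons]
    exact List.mem_cons_of_mem a hz

lemma legal_length_le {V : Type*} [Finite V] (G : SimpleGraph V) {s : List V}
    (h : LegalSeq G s) : s.length ≤ Nat.card V := by
  have := Fintype.ofFinite V
  rw [Nat.card_eq_fintype_card]
  exact h.1.length_le_card

/-- Every legal sequence extends to a maximal legal sequence. -/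
lemma legal_extend {V : Type*} [Finite V] (G : SimpleGraph V) (s : List V)
    (hs : LegalSeq G s) :
    ∃ r : List V, LegalSeq G (s ++ r) ∧ ∀ t, ¬ LegalSeq G ((s ++ r) ++ [t]) := by
  have key : ∀ (n : ℕ) (s : List V), LegalSeq G s → Nat.card V ≤ s.length + n →
      ∃ r : List V, LegalSeq G (s ++ r) ∧ ∀ t, ¬ LegalSeq G ((s ++ r) ++ [t]) := by
    intro n
    induction n with
    | zero =>
      intro s hs hle
      refine ⟨[], by simpa using hs, ?_⟩
      intro t ht
      have h1 := legal_length_le G ht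
      simp at h1
      omega
    | succ n ih =>
      intro s hs hle
      by_cases h : ∃ t, LegalSeq G (s ++ [t])
      · obtain ⟨t, ht⟩ := h
        obtain ⟨r, hr, hmax⟩ := ih (s ++ [t]) ht (by simp; omega)
        refine ⟨t :: r, ?_, ?_⟩
        · simpa using hr
        · intro z hz
          exact hmax z (by simpa using hz)
      · exact ⟨[], by simpa using hs, fun t ht => h ⟨t, by simpa using ht⟩⟩
  exact key (Nat.card V) s hs (by omega)

/-- A maximal legal sequence is a total dominating sequence. -/
lemma maximal_legal_totalDom {V : Type*} (G : SimpleGraph V)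
    (hiso : NoIsolatedVerts G) {s : List V} (hs : LegalSeq G s)
    (hmax : ∀ t, ¬ LegalSeq G (s ++ [t])) : TotalDomSet G {v | v ∈ s} := by
  intro p
  by_contra hc
  push_neg at hc
  simp only [Set.mem_setOf_eq] at hc
  obtain ⟨q, hq⟩ := hiso p
  have hqs : q ∉ s := fun hqmem => hc q hqmem hq
  apply hmax q
  rw [legal_snoc_iff]
  refine ⟨hs, hqs, fun _ => ⟨p, hq.symm, ?_⟩⟩
  intro z hz hzp
  exact hc z hz hzp.symm

/-- In a total `k`-uniform graph, every total dominating sequence has length `k`. -/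
lemma totalDomSeq_length {V : Type*} [Finite V] (G : SimpleGraph V) (k : ℕ)
    (huni : TotalKUniform G k) {s : List V} (hs : TotalDomSeq G s) : s.length = k := by
  classical
  have := Fintype.ofFinite V
  obtain ⟨ht, hg⟩ := huni
  have hle : s.length ≤ k := by
    rw [← hg]
    apply le_csSup
    · refine ⟨Fintype.card V, ?_⟩
      rintro n ⟨s', hs', rfl⟩
      exact hs'.1.1.length_le_card
    · exact ⟨s, hs, rfl⟩
  have hge : k ≤ s.length := by
    rw [← ht]
    apply Nat.sInf_le
    refine ⟨{v | v ∈ s}, hs.2, ?_⟩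
    have hset : {v | v ∈ s} = (s.toFinset : Set V) := by
      ext z; simp
    rw [hset, Set.ncard_coe_finset, List.toFinset_card_of_nodup hs.1.1]
  omega

/-- The key contradiction lemma. -/
lemma key_lemma {V : Type*} [Finite V] (G : SimpleGraph V) (k : ℕ)
    (hiso : NoIsolatedVerts G) (huni : TotalKUniform G k) (u v x y w : V)
    (hadj : G.Adj u v)
    (hxT : x ∈ (closedNbhd G u ∪ closedNbhd G v)ᶜ)
    (hyT : y ∈ (closedNbhd G u ∪ closedNbhd G v)ᶜ)
    (hxy : x ≠ y)
    (htwin : ∀ z, z ∈ (closedNbhd G u ∪ closedNbhd G v)ᶜ → (G.Adj x z ↔ G.Adj y z))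
    (hwx : G.Adj x w) (hwy : ¬ G.Adj y w) : False := by
  simp only [Set.mem_compl_iff, Set.mem_union, closedNbhd, Set.mem_insert_iff,
    SimpleGraph.mem_neighborSet, not_or] at hxT hyT
  obtain ⟨⟨hxu, hux⟩, ⟨hxv, hvx⟩⟩ := hxT
  obtain ⟨⟨hyu, huy⟩, ⟨hyv, hvy⟩⟩ := hyT
  -- the sequence [y, x, u, v] is legal
  have hs0 : LegalSeq G [y, x, u, v] := by
    have h1 : LegalSeq G ([] : List V) := ⟨List.nodup_nil, by intro i h; simp at h⟩
    have h2 : LegalSeq G [y] := by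
      have := (legal_snoc_iff G [] y).2 ⟨h1, by simp, by simp⟩
      simpa using this
    have h3 : LegalSeq G [y, x] := by
      have := (legal_snoc_iff G [y] x).2 ⟨h2, by simpa using hxy, fun _ => ⟨w, hwx, ?_⟩⟩
      · simpa using this
      · intro z hz
        simp at hz; subst hz; exact hwy
    have h4 : LegalSeq G [y, x, u] := by
      have := (legal_snoc_iff G [y, x] u).2 ⟨h3, by simp [Ne.symm hyu, Ne.symm hxu],
        fun _ => ⟨v, hadj, ?_⟩⟩
      · simpa using this
      · intro z hz
        simp at hz
        rcases hz with rfl | rfl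
        · exact fun h => hvy h.symm
        · exact fun h => hvx h.symm
    have := (legal_snoc_iff G [y, x, u] v).2 ⟨h4,
      by simp [Ne.symm hyv, Ne.symm hxv, (G.ne_of_adj hadj).symm], fun _ => ⟨u, hadj.symm, ?_⟩⟩
    · simpa using this
    · intro z hz
      simp at hz
      rcases hz with rfl | rfl | rfl
      · exact fun h => huy h.symm
      · exact fun h => hux h.symm
      · exact G.irrefl
  -- extend to a maximal legal sequence
  obtain ⟨r, hsr, hsrmax⟩ := legal_extend G [y, x, u, v] hs0
  have hdom : TotalDomSet G {p | p ∈ [y, x, u, v] ++ r} :=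
    maximal_legal_totalDom G hiso hsr hsrmax
  have hlen : ([y, x, u, v] ++ r).length = k :=
    totalDomSeq_length G k huni ⟨hsr, hdom⟩
  -- drop y from the front
  have hs' : LegalSeq G ([x, u, v] ++ r) := by
    have : ([y, x, u, v] ++ r) = y :: ([x, u, v] ++ r) := by simp
    rw [this] at hsr
    exact legal_tail_s5 G hsr
  -- extend it to a maximal legal sequence; exactly one vertex gets appended
  obtain ⟨r₂, hs'', hs''max⟩ := legal_extend G ([x, u, v] ++ r) hs'
  have hlen'' : (([x, u, v] ++ r) ++ r₂).length = k :=
    totalDomSeq_length G k huni ⟨hs'', maximal_legal_totalDom G hiso hs'' hs''max⟩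
  have hr₂len : r₂.length = 1 := by
    simp at hlen hlen''
    omega
  obtain ⟨t, rfl⟩ := List.length_eq_one_iff.1 hr₂len
  -- extract the witness for t
  rw [legal_snoc_iff] at hs''
  obtain ⟨-, -, hwt⟩ := hs''
  obtain ⟨wt, hwt1, hwt2⟩ := hwt (by simp)
  -- wt has a neighbor in the original total dominating set; it must be y
  obtain ⟨a, ha, hawt⟩ := hdom wt
  have ha' : a = y ∨ a ∈ [x, u, v] ++ r := by
    have hcons : ([y, x, u, v] ++ r) = y :: ([x, u, v] ++ r) := by simp
    rw [Set.mem_setOf_eq, hcons, List.mem_cons] at ha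
    exact ha
  rcases ha' with hay | hmem
  swap
  · exact absurd hawt.symm (hwt2 a hmem)
  rw [hay] at hawt
  have hywt : G.Adj y wt := hawt.symm
  -- wt lies outside the closed neighborhoods of u and v
  have hwtT : wt ∈ (closedNbhd G u ∪ closedNbhd G v)ᶜ := by
    simp only [Set.mem_compl_iff, Set.mem_union, closedNbhd, Set.mem_insert_iff,
      SimpleGraph.mem_neighborSet, not_or]
    refine ⟨⟨?_, ?_⟩, ?_, ?_⟩
    · rintro rfl; exact huy hywt.symm
    · exact hwt2 u (by simp)
    · rintro rfl; exact hvy hywt.symm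
    · exact hwt2 v (by simp)
  have : G.Adj x wt := (htwin wt hwtT).2 hywt
  exact hwt2 x (by simp) this

/-- Let `k ≥ 4` be even and `G` a total `k`-uniform, false twin-free graph with no isolated
vertices. Then for every edge `uv` of `G`, the subgraph induced by `V(G) \ (N[u] ∪ N[v])` is
false twin-free. -/
theorem stmt_5 {V : Type*} [Finite V] (G : SimpleGraph V) (k : ℕ) (hk4 : 4 ≤ k)
    (hke : Even k) (hiso : NoIsolatedVerts G) (hftf : FalseTwinFree G)
    (huni : TotalKUniform G k) (u v : V) (hadj : G.Adj u v) :
    FalseTwinFree (G.induce ((closedNbhd G u ∪ closedNbhd G v)ᶜ)) := by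
  intro a b hab hEq
  have hxy : (a : V) ≠ (b : V) := fun h => hab (Subtype.ext h)
  have htwin : ∀ z, z ∈ (closedNbhd G u ∪ closedNbhd G v)ᶜ →
      (G.Adj (a : V) z ↔ G.Adj (b : V) z) := by
    intro z hz
    have h1 := Set.ext_iff.1 hEq ⟨z, hz⟩
    simpa [SimpleGraph.mem_neighborSet] using h1
  have hNne := hftf (a : V) (b : V) hxy
  have : ∃ w, (G.Adj (a : V) w ∧ ¬ G.Adj (b : V) w) ∨ (G.Adj (b : V) w ∧ ¬ G.Adj (a : V) w) := by
    by_contra hc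
    push_neg at hc
    apply hNne
    ext z
    simp only [SimpleGraph.mem_neighborSet]
    have := hc z
    tauto
  obtain ⟨w, hw | hw⟩ := this
  · exact key_lemma G k hiso huni u v (a : V) (b : V) w hadj a.2 b.2 hxy htwin hw.1 hw.2
  · exact key_lemma G k hiso huni u v (b : V) (a : V) w hadj b.2 a.2 hxy.symm
      (fun z hz => (htwin z hz).symm) hw.1 hw.2
end

section
/- The line graph L(K₆) of the complete graph on 6 vertices is total 4-uniform, i.e., γ_t(L(K₆)) = γ_gr^t(L(K₆)) = 4. (Moreover L(K₆) is connected, false twin-free and contains a triangle, so it is a connected non-bipartite total 4-uniform graph.) -/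
open SimpleGraph

/-- The line graph `L(Kₙ)` of the complete graph `Kₙ`: vertices are the 2-element subsets of
`{1, …, n}`, two of them being adjacent iff they are distinct and intersect. -/
def lineK (n : ℕ) : SimpleGraph {s : Finset (Fin n) // s.card = 2} where
  Adj a b := a ≠ b ∧ (a.1 ∩ b.1).Nonempty
  symm := ⟨fun a b h => ⟨h.1.symm, by rw [Finset.inter_comm]; exact h.2⟩⟩
  loopless := ⟨fun a h => h.1 rfl⟩

/- ### Auxiliary material -/

abbrev LK6.V : Type := {s : Finset (Fin 6) // s.card = 2}

instance : DecidableRel (lineK 6).Adj := fun a b =>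
  inferInstanceAs (Decidable (a ≠ b ∧ (a.1 ∩ b.1).Nonempty))

/-- A 2-element-subset vertex of `L(K₆)`. -/
def LK6.ee (a b : Fin 6) (h : ({a, b} : Finset (Fin 6)).card = 2) : LK6.V := ⟨{a, b}, h⟩

open LK6 in
/-- The witness total dominating sequence of length 4. -/
def LK6.s0 : List LK6.V := [ee 0 1 (by decide), ee 0 2 (by decide),
  ee 3 4 (by decide), ee 3 5 (by decide)]

/-- The neighborhood of a vertex as a `Finset`. -/
def LK6.nbr (f : LK6.V) : Finset LK6.V := Finset.univ.filter ((lineK 6).Adj f)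

lemma LK6.mem_nbr {f w : LK6.V} : w ∈ LK6.nbr f ↔ (lineK 6).Adj f w := by
  simp [LK6.nbr]

/-- No three vertices totally dominate `L(K₆)`. -/
lemma LK6.no_three : ∀ a b c : LK6.V, ∃ v : LK6.V,
    ¬ (lineK 6).Adj v a ∧ ¬ (lineK 6).Adj v b ∧ ¬ (lineK 6).Adj v c := by decide

/-- The key computation: if a third vertex in a legal sequence has a private neighbor, then
at most one vertex of `L(K₆)` remains totally undominated. -/
lemma LK6.key : ∀ f0 f1 f2 : LK6.V, f0 ≠ f1 →
    ((LK6.nbr f2) \ (LK6.nbr f0 ∪ LK6.nbr f1)).Nonempty →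
    (Finset.univ \ (LK6.nbr f0 ∪ LK6.nbr f1 ∪ LK6.nbr f2)).card ≤ 1 := by decide

lemma LK6.get_mem_take {α : Type*} (s : List α) (i j : ℕ) (hj : j < i) (h : j < s.length) :
    s.get ⟨j, h⟩ ∈ s.take i := by
  have hl : j < (s.take i).length := by
    rw [List.length_take]; omega
  have hmem := List.getElem_mem (l := s.take i) (n := j) hl
  rwa [List.getElem_take] at hmem

/-- Every legal sequence of `L(K₆)` has length at most 4. -/
lemma LK6.legal_len_le (s : List LK6.V) (hs : LegalSeq (lineK 6) s) : s.length ≤ 4 := by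
  by_contra hl
  push_neg at hl
  obtain ⟨hnd, hleg⟩ := hs
  have e0 : (0:ℕ) < s.length := by omega
  have e1 : (1:ℕ) < s.length := by omega
  have e2 : (2:ℕ) < s.length := by omega
  have e3 : (3:ℕ) < s.length := by omega
  have e4 : (4:ℕ) < s.length := by omega
  set f0 := s.get ⟨0, e0⟩ with hf0
  set f1 := s.get ⟨1, e1⟩ with hf1
  set f2 := s.get ⟨2, e2⟩ with hf2
  set f3 := s.get ⟨3, e3⟩ with hf3
  have hne : f0 ≠ f1 := by
    intro h
    have := (List.nodup_iff_injective_get.mp hnd) h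
    simp at this
  obtain ⟨w2, hw2a, hw2n⟩ := hleg 2 e2 (by omega)
  obtain ⟨w3, hw3a, hw3n⟩ := hleg 3 e3 (by omega)
  obtain ⟨w4, hw4a, hw4n⟩ := hleg 4 e4 (by omega)
  have hcard := LK6.key f0 f1 f2 hne ⟨w2, by
    rw [Finset.mem_sdiff, Finset.mem_union, LK6.mem_nbr, LK6.mem_nbr, LK6.mem_nbr]
    refine ⟨hw2a, ?_⟩
    rintro (h | h)
    · exact hw2n f0 (LK6.get_mem_take s 2 0 (by omega) e0) h
    · exact hw2n f1 (LK6.get_mem_take s 2 1 (by omega) e1) h⟩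
  have hw3R : w3 ∈ Finset.univ \ (LK6.nbr f0 ∪ LK6.nbr f1 ∪ LK6.nbr f2) := by
    rw [Finset.mem_sdiff, Finset.mem_union, Finset.mem_union,
      LK6.mem_nbr, LK6.mem_nbr, LK6.mem_nbr]
    refine ⟨Finset.mem_univ _, ?_⟩
    rintro ((h | h) | h)
    · exact hw3n f0 (LK6.get_mem_take s 3 0 (by omega) e0) h
    · exact hw3n f1 (LK6.get_mem_take s 3 1 (by omega) e1) h
    · exact hw3n f2 (LK6.get_mem_take s 3 2 (by omega) e2) h
  have hw4R : w4 ∈ Finset.univ \ (LK6.nbr f0 ∪ LK6.nbr f1 ∪ LK6.nbr f2) := by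
    rw [Finset.mem_sdiff, Finset.mem_union, Finset.mem_union,
      LK6.mem_nbr, LK6.mem_nbr, LK6.mem_nbr]
    refine ⟨Finset.mem_univ _, ?_⟩
    rintro ((h | h) | h)
    · exact hw4n f0 (LK6.get_mem_take s 4 0 (by omega) e0) h
    · exact hw4n f1 (LK6.get_mem_take s 4 1 (by omega) e1) h
    · exact hw4n f2 (LK6.get_mem_take s 4 2 (by omega) e2) h
  have heq : w3 = w4 := Finset.card_le_one.mp hcard w3 hw3R w4 hw4R
  have h3 : (lineK 6).Adj f3 w3 := hw3a
  have h4 : ¬ (lineK 6).Adj f3 w4 := by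
    intro h
    exact hw4n f3 (LK6.get_mem_take s 4 3 (by omega) e3) h
  exact h4 (heq ▸ h3)

lemma LK6.s0_legal : LegalSeq (lineK 6) LK6.s0 := by
  refine ⟨by decide, ?_⟩
  intro i h hi
  have h4 : i < 4 := h
  interval_cases i
  · show ∃ w : LK6.V, (lineK 6).Adj (LK6.ee 0 2 (by decide)) w ∧
      ∀ u ∈ LK6.s0.take 1, ¬ (lineK 6).Adj u w
    decide
  · show ∃ w : LK6.V, (lineK 6).Adj (LK6.ee 3 4 (by decide)) w ∧
      ∀ u ∈ LK6.s0.take 2, ¬ (lineK 6).Adj u w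
    decide
  · show ∃ w : LK6.V, (lineK 6).Adj (LK6.ee 3 5 (by decide)) w ∧
      ∀ u ∈ LK6.s0.take 3, ¬ (lineK 6).Adj u w
    decide

lemma LK6.s0_dom : ∀ v : LK6.V, ∃ a, a ∈ LK6.s0 ∧ (lineK 6).Adj v a := by decide

lemma LK6.s0_tds : TotalDomSeq (lineK 6) LK6.s0 :=
  ⟨LK6.s0_legal, fun v => by
    obtain ⟨a, ha, hadj⟩ := LK6.s0_dom v
    exact ⟨a, ha, hadj⟩⟩

lemma LK6.totalDomNum_eq : totalDomNum (lineK 6) = 4 := by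
  have hmem : 4 ∈ {n | ∃ A : Set LK6.V, TotalDomSet (lineK 6) A ∧ A.ncard = n} := by
    refine ⟨(↑LK6.s0.toFinset : Set LK6.V), ?_, ?_⟩
    · intro v
      obtain ⟨a, ha, hadj⟩ := LK6.s0_dom v
      exact ⟨a, by simpa using ha, hadj⟩
    · rw [Set.ncard_coe_finset]
      decide
  have hlow : ∀ n ∈ {n | ∃ A : Set LK6.V, TotalDomSet (lineK 6) A ∧ A.ncard = n}, 4 ≤ n := by
    rintro n ⟨A, hA, rfl⟩
    by_contra h
    push_neg at h
    have hfin : A.Finite := Set.toFinite A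
    have hcard : hfin.toFinset.card ≤ 3 := by
      rw [← Set.ncard_eq_toFinset_card A hfin]; omega
    obtain ⟨t, hsub, ht⟩ := Finset.exists_superset_card_eq hcard (by decide)
    obtain ⟨x, y, z, _, _, _, rfl⟩ := Finset.card_eq_three.mp ht
    obtain ⟨v, hx, hy, hz⟩ := LK6.no_three x y z
    obtain ⟨a, ha, hadj⟩ := hA v
    have : a ∈ ({x, y, z} : Finset LK6.V) := hsub (hfin.mem_toFinset.mpr ha)
    simp only [Finset.mem_insert, Finset.mem_singleton] at this
    rcases this with rfl | rfl | rfl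
    · exact hx hadj
    · exact hy hadj
    · exact hz hadj
  exact le_antisymm (Nat.sInf_le hmem) (le_csInf ⟨4, hmem⟩ hlow)

lemma LK6.grundy_eq : grundyTotalDomNum (lineK 6) = 4 := by
  have hmem : 4 ∈ {n | ∃ s : List LK6.V, TotalDomSeq (lineK 6) s ∧ s.length = n} :=
    ⟨LK6.s0, LK6.s0_tds, rfl⟩
  have hbd : ∀ n ∈ {n | ∃ s : List LK6.V, TotalDomSeq (lineK 6) s ∧ s.length = n}, n ≤ 4 := by
    rintro n ⟨s, hs, rfl⟩
    exact LK6.legal_len_le s hs.1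
  exact le_antisymm (csSup_le ⟨4, hmem⟩ hbd) (le_csSup ⟨4, hbd⟩ hmem)

lemma LK6.two_step : ∀ u v : LK6.V, u ≠ v → ¬ (lineK 6).Adj u v →
    ∃ w, (lineK 6).Adj u w ∧ (lineK 6).Adj w v := by decide

lemma LK6.ftf_wit : ∀ u v : LK6.V, u ≠ v →
    ∃ w, (lineK 6).Adj u w ∧ ¬ (lineK 6).Adj v w := by decide

/-- The line graph `L(K₆)` is total 4-uniform; moreover it is connected, false twin-free and
contains a triangle (hence is non-bipartite). -/
theorem stmt_7 :
    TotalKUniform (lineK 6) 4 ∧ (lineK 6).Connected ∧ FalseTwinFree (lineK 6) ∧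
    ∃ a b c, (lineK 6).Adj a b ∧ (lineK 6).Adj b c ∧ (lineK 6).Adj a c := by
  refine ⟨⟨LK6.totalDomNum_eq, LK6.grundy_eq⟩, ?_, ?_, ?_⟩
  · rw [connected_iff]
    refine ⟨?_, ⟨LK6.ee 0 1 (by decide)⟩⟩
    intro u v
    by_cases h : u = v
    · exact h ▸ Reachable.refl u
    · by_cases hadj : (lineK 6).Adj u v
      · exact hadj.reachable
      · obtain ⟨w, h1, h2⟩ := LK6.two_step u v h hadj
        exact h1.reachable.trans h2.reachable
  · intro u v huv heq
    obtain ⟨w, h1, h2⟩ := LK6.ftf_wit u v huv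
    have hw : w ∈ (lineK 6).neighborSet u := h1
    rw [heq] at hw
    exact h2 hw
  · exact ⟨LK6.ee 0 1 (by decide), LK6.ee 0 2 (by decide), LK6.ee 1 2 (by decide),
      by decide, by decide, by decide⟩
end

section
/- Let G be a connected, non-bipartite, total k-uniform graph. Then the direct product G × K₂ (the bipartite double cover of G) is a connected total 2k-uniform graph. -/
open SimpleGraph

/-- The direct (tensor) product of graphs: `(g,h)` is adjacent to `(g',h')` iff
`gg' ∈ E(G)` and `hh' ∈ E(H)`. In particular `directProd G (⊤ : SimpleGraph (Fin 2))` is the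
bipartite double cover `G × K₂` of `G`. -/
def directProd {V W : Type*} (G : SimpleGraph V) (H : SimpleGraph W) :
    SimpleGraph (V × W) where
  Adj a b := G.Adj a.1 b.1 ∧ H.Adj a.2 b.2
  symm := ⟨fun a b h => ⟨h.1.symm, h.2.symm⟩⟩
  loopless := ⟨fun a h => G.loopless.irrefl a.1 h.1⟩

/-- `G` is bipartite: the vertices can be split into two parts so that every edge joins the
two parts. -/
def IsBipartite {V : Type*} (G : SimpleGraph V) : Prop :=
  ∃ A : Set V, ∀ ⦃u v : V⦄, G.Adj u v → (u ∈ A ↔ v ∉ A)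

/- ### Auxiliary development -/

section Aux

variable {V : Type*} (G : SimpleGraph V)

/-- A structural (snoc-based) characterization of legal sequences. -/
inductive LegalR : List V → Prop
  | nil : LegalR []
  | single (a : V) : LegalR [a]
  | snoc (t : List V) (a w : V) : LegalR t → a ∉ t → G.Adj a w →
      (∀ u ∈ t, ¬ G.Adj u w) → LegalR (t ++ [a])

variable {G}

theorem LegalR.nodup {s : List V} (h : LegalR G s) : s.Nodup := by
  induction h with
  | nil => simp
  | single a => simp
  | snoc t a w ht hna hadj hw ih =>
    simp [List.nodup_append, ih]; exact fun x hx hxa => hna (hxa ▸ hx)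

theorem LegalR.legalSeq {s : List V} (h : LegalR G s) : LegalSeq G s := by
  induction h with
  | nil => exact ⟨by simp, by simp⟩
  | single a => refine ⟨by simp, ?_⟩; intro i hi h0; simp at hi; omega
  | snoc t a w ht hna hadj hw ih =>
    refine ⟨(LegalR.snoc t a w ht hna hadj hw).nodup, ?_⟩
    intro i hi h0
    simp only [List.length_append, List.length_singleton] at hi
    rcases lt_or_eq_of_le (Nat.lt_succ_iff.mp hi) with hlt | heq
    · obtain ⟨w', hw1, hw2⟩ := ih.2 i hlt h0
      refine ⟨w', ?_, ?_⟩
      · simpa [List.get_eq_getElem, List.getElem_append_left hlt] using hw1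
      · intro u hu
        rw [List.take_append_of_le_length (le_of_lt hlt)] at hu
        exact hw2 u hu
    · subst heq
      refine ⟨w, ?_, ?_⟩
      · simp only [List.get_eq_getElem]
        rw [List.getElem_concat_length rfl]; exact hadj
      · intro u hu
        rw [List.take_append_of_le_length (le_refl _), List.take_length] at hu
        exact hw u hu

theorem LegalSeq.legalR {s : List V} (h : LegalSeq G s) : LegalR G s := by
  induction s using List.reverseRecOn with
  | nil => exact LegalR.nil
  | append_singleton t a ih =>
    rcases List.eq_nil_or_concat t with rfl | _
    · exact LegalR.single a
    have hnd := h.1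
    have htnd : t.Nodup := hnd.of_append_left
    have hna : a ∉ t := fun hx => (List.disjoint_of_nodup_append hnd) hx (by simp)
    have hlegal_t : LegalSeq G t := by
      refine ⟨htnd, ?_⟩
      intro i hi h0
      have hi' : i < (t ++ [a]).length := by simp; omega
      obtain ⟨w', hw1, hw2⟩ := h.2 i hi' h0
      refine ⟨w', ?_, ?_⟩
      · simpa [List.get_eq_getElem, List.getElem_append_left hi] using hw1
      · intro u hu
        exact hw2 u (by rwa [List.take_append_of_le_length (le_of_lt hi)])
    have ht : LegalR G t := ih hlegal_t
    have hlen : 0 < t.length := List.length_pos_iff.mpr (by rename_i h'; rcases h' with ⟨l, b, rfl⟩; simp)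
    have hi' : t.length < (t ++ [a]).length := by simp
    obtain ⟨w', hw1, hw2⟩ := h.2 t.length hi' hlen
    refine LegalR.snoc t a w' ht hna ?_ ?_
    · simpa [List.get_eq_getElem, List.getElem_concat_length] using hw1
    · intro u hu
      exact hw2 u (by rw [List.take_append_of_le_length (le_refl _), List.take_length]; exact hu)

theorem legalSeq_iff_legalR {s : List V} : LegalSeq G s ↔ LegalR G s :=
  ⟨LegalSeq.legalR, LegalR.legalSeq⟩

theorem list_length_le_card [Finite V] {s : List V} (h : s.Nodup) : s.length ≤ Nat.card V := by
  have := Fintype.ofFinite V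
  simpa [Nat.card_eq_fintype_card] using h.length_le_card

/-- Every legal sequence extends to a total dominating sequence (greedy extension). -/
theorem exists_tds_extend [Finite V] (hiso : NoIsolatedVerts G) (s : List V) (hs : LegalR G s) :
    ∃ t : List V, LegalR G t ∧ TotalDomSet G {v | v ∈ t} ∧ s.length ≤ t.length := by
  obtain ⟨n, hn⟩ : ∃ n, Nat.card V ≤ s.length + n := ⟨Nat.card V, by omega⟩
  induction n generalizing s with
  | zero =>
    refine ⟨s, hs, ?_, le_refl _⟩
    have hall : ∀ v : V, v ∈ s := by
      intro v
      by_contra hv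
      have : (v :: s).Nodup := List.nodup_cons.mpr ⟨hv, hs.nodup⟩
      have := list_length_le_card this
      simp at this; omega
    intro v
    obtain ⟨w, hw⟩ := hiso v
    exact ⟨w, hall w, hw⟩
  | succ n ih =>
    by_cases hdom : TotalDomSet G {v | v ∈ s}
    · exact ⟨s, hs, hdom, le_refl _⟩
    · simp only [TotalDomSet, not_forall] at hdom
      obtain ⟨v, hv⟩ := hdom
      push_neg at hv
      obtain ⟨a, ha⟩ := hiso v
      have hna : a ∉ s := fun h => hv a (by simpa using h) ha
      have hs' : LegalR G (s ++ [a]) :=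
        LegalR.snoc s a v hs hna ha.symm (fun u hu hadj => hv u (by simpa using hu) hadj.symm)
      obtain ⟨t, ht1, ht2, ht3⟩ := ih (s ++ [a]) hs' (by simp; omega)
      exact ⟨t, ht1, ht2, by simp at ht3; omega⟩

theorem directProd_top_adj {p q : V × Fin 2} :
    (directProd G (⊤ : SimpleGraph (Fin 2))).Adj p q ↔ G.Adj p.1 q.1 ∧ p.2 ≠ q.2 := by
  simp [directProd]

/-- Projection of one side of a sequence in the double cover. -/
def projSide (c : Fin 2) (s : List (V × Fin 2)) : List V :=
  (s.filter (fun p => p.2 == c)).map Prod.fst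

theorem projSide_legal {s : List (V × Fin 2)}
    (hs : LegalR (directProd G (⊤ : SimpleGraph (Fin 2))) s) (c : Fin 2) :
    LegalR G (projSide c s) := by
  induction hs with
  | nil => exact LegalR.nil
  | single a =>
    by_cases h : a.2 = c
    · simpa [projSide, List.filter_singleton, beq_iff_eq, h] using LegalR.single a.1
    · simpa [projSide, List.filter_singleton, beq_iff_eq, h] using LegalR.nil
  | snoc t a w ht hna hadj hw ih =>
    by_cases h : a.2 = c
    · have hrw : projSide c (t ++ [a]) = projSide c t ++ [a.1] := by
        simp [projSide, List.filter_append, List.filter_singleton, beq_iff_eq, h]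
      rw [hrw]
      refine LegalR.snoc _ a.1 w.1 ih ?_ (directProd_top_adj.mp hadj).1 ?_
      · intro hmem
        simp only [projSide, List.mem_map, List.mem_filter, beq_iff_eq] at hmem
        obtain ⟨p, ⟨hp1, hp2⟩, hp3⟩ := hmem
        exact hna (by rwa [show a = p from Prod.ext hp3.symm (by rw [hp2, h])])
      · intro u hu
        simp only [projSide, List.mem_map, List.mem_filter, beq_iff_eq] at hu
        obtain ⟨p, ⟨hp1, hp2⟩, rfl⟩ := hu
        intro hadj'
        exact hw p hp1 (directProd_top_adj.mpr ⟨hadj', by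
          rw [hp2, ← h]; exact (directProd_top_adj.mp hadj).2⟩)
    · have hrw : projSide c (t ++ [a]) = projSide c t := by
        simp [projSide, List.filter_append, List.filter_singleton, beq_iff_eq, h]
      rwa [hrw]

theorem projSide_length (s : List (V × Fin 2)) :
    s.length = (projSide 0 s).length + (projSide 1 s).length := by
  induction s with
  | nil => simp [projSide]
  | cons p s ih =>
    have hp : p.2 = 0 ∨ p.2 = 1 := by omega
    rcases hp with h | h <;>
      simp [projSide, List.filter, h, List.length_map] at ih ⊢ <;> omega

theorem lift0_legal {s : List V} (hs : LegalR G s) :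
    LegalR (directProd G (⊤ : SimpleGraph (Fin 2))) (s.map (fun v => (v, (0 : Fin 2)))) := by
  induction hs with
  | nil => exact LegalR.nil
  | single a => exact LegalR.single _
  | snoc t a w ht hna hadj hw ih =>
    rw [List.map_append, List.map_singleton]
    refine LegalR.snoc _ (a, 0) (w, 1) ih ?_ (directProd_top_adj.mpr ⟨hadj, by simp⟩) ?_
    · intro hmem; simp only [List.mem_map] at hmem
      obtain ⟨v, hv, hve⟩ := hmem
      exact hna (by rwa [show a = v from congrArg Prod.fst hve.symm])
    · intro u hu; simp only [List.mem_map] at hu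
      obtain ⟨v, hv, rfl⟩ := hu
      intro hadj'
      exact hw v hv (directProd_top_adj.mp hadj').1

theorem lift1_append (hiso : NoIsolatedVerts G) {s : List V} (hs : LegalR G s)
    (r : List (V × Fin 2)) (hr : LegalR (directProd G (⊤ : SimpleGraph (Fin 2))) r)
    (hr0 : ∀ p ∈ r, p.2 = 0) :
    LegalR (directProd G (⊤ : SimpleGraph (Fin 2))) (r ++ s.map (fun v => (v, (1 : Fin 2)))) := by
  induction hs with
  | nil => simpa using hr
  | single a =>
    obtain ⟨w, hw⟩ := hiso a
    refine LegalR.snoc r (a, 1) (w, 0) hr ?_ (directProd_top_adj.mpr ⟨hw, by simp⟩) ?_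
    · intro hmem; have := hr0 _ hmem; simp at this
    · intro u hu hadj'
      have h2 := (directProd_top_adj.mp hadj').2
      rw [hr0 u hu] at h2; exact h2 rfl
  | snoc t a w ht hna hadj hw ih =>
    rw [List.map_append, List.map_singleton, ← List.append_assoc]
    refine LegalR.snoc _ (a, 1) (w, 0) ih ?_ (directProd_top_adj.mpr ⟨hadj, by simp⟩) ?_
    · intro hmem
      rcases List.mem_append.mp hmem with h | h
      · have := hr0 _ h; simp at this
      · simp only [List.mem_map] at h
        obtain ⟨v, hv, hve⟩ := h
        exact hna (by rwa [show a = v from congrArg Prod.fst hve.symm])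
    · intro u hu hadj'
      rcases List.mem_append.mp hu with h | h
      · have h2 := (directProd_top_adj.mp hadj').2
        rw [hr0 u h] at h2; exact h2 rfl
      · simp only [List.mem_map] at h
        obtain ⟨v, hv, rfl⟩ := h
        exact hw v hv (directProd_top_adj.mp hadj').1

theorem tds_lift {A : Set V} (hA : TotalDomSet G A) :
    TotalDomSet (directProd G (⊤ : SimpleGraph (Fin 2))) (A ×ˢ (Set.univ : Set (Fin 2))) := by
  rintro ⟨v, c⟩
  obtain ⟨a, haA, hadj⟩ := hA v
  exact ⟨(a, c + 1), ⟨haA, trivial⟩, directProd_top_adj.mpr ⟨hadj, show c ≠ c + 1 by omega⟩⟩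

theorem ncard_prod_univ_fin2 [Finite V] (A : Set V) :
    (A ×ˢ (Set.univ : Set (Fin 2))).ncard = 2 * A.ncard := by
  rw [← Nat.card_coe_set_eq, ← Nat.card_coe_set_eq,
    Nat.card_congr (Equiv.Set.prod A Set.univ), Nat.card_prod]
  have : Nat.card (Set.univ : Set (Fin 2)) = 2 := by
    rw [Nat.card_congr (Equiv.Set.univ _)]; simp
  rw [this]; ring

theorem tds_proj {B : Set (V × Fin 2)}
    (hB : TotalDomSet (directProd G (⊤ : SimpleGraph (Fin 2))) B) (c : Fin 2) :
    TotalDomSet G {v | (v, c) ∈ B} := by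
  intro v
  obtain ⟨⟨a, e⟩, haB, hadj⟩ := hB (v, c + 1)
  rw [directProd_top_adj] at hadj
  have : e = c := by have := hadj.2; simp at this ⊢; omega
  exact ⟨a, by rwa [← this], hadj.1⟩

theorem ncard_split_fin2 [Finite V] (B : Set (V × Fin 2)) :
    B.ncard = {v | (v, (0:Fin 2)) ∈ B}.ncard + {v | (v, (1:Fin 2)) ∈ B}.ncard := by
  have hB : B = ((fun v => (v, (0:Fin 2))) '' {v | (v, (0:Fin 2)) ∈ B}) ∪
      ((fun v => (v, (1:Fin 2))) '' {v | (v, (1:Fin 2)) ∈ B}) := by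
    ext ⟨v, c⟩
    simp only [Set.mem_union, Set.mem_image, Set.mem_setOf_eq, Prod.mk.injEq]
    constructor
    · intro h
      have : c = 0 ∨ c = 1 := by omega
      rcases this with rfl | rfl
      · exact Or.inl ⟨v, h, rfl, rfl⟩
      · exact Or.inr ⟨v, h, rfl, rfl⟩
    · rintro (⟨w, hw, rfl, rfl⟩ | ⟨w, hw, rfl, rfl⟩) <;> exact hw
  have hdisj : Disjoint ((fun v => (v, (0:Fin 2))) '' {v | (v, (0:Fin 2)) ∈ B})
      ((fun v => (v, (1:Fin 2))) '' {v | (v, (1:Fin 2)) ∈ B}) := by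
    rw [Set.disjoint_left]
    rintro ⟨v, c⟩ h1 h2
    simp only [Set.mem_image, Prod.mk.injEq] at h1 h2
    obtain ⟨_, _, _, rfl⟩ := h1
    obtain ⟨_, _, _, h⟩ := h2
    exact absurd h (by simp)
  conv_lhs => rw [hB]
  rw [Set.ncard_union_eq hdisj (Set.toFinite _) (Set.toFinite _),
    Set.ncard_image_of_injective _ (fun a b h => congrArg Prod.fst h),
    Set.ncard_image_of_injective _ (fun a b h => congrArg Prod.fst h)]

open Fin.NatCast Fin.CommRing

theorem odd_cast_fin2 {n : ℕ} (h : Odd n) : (n : Fin 2) = 1 := by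
  obtain ⟨t, rfl⟩ := h
  push_cast
  simp

theorem walk_lift {u v : V} (p : G.Walk u v) (c : Fin 2) :
    (directProd G (⊤ : SimpleGraph (Fin 2))).Reachable (u, c) (v, c + (p.length : Fin 2)) := by
  induction p generalizing c with
  | nil =>
    simp only [SimpleGraph.Walk.length_nil, Nat.cast_zero, add_zero]
    exact SimpleGraph.Reachable.refl _
  | cons h q ih =>
    rename_i x y z
    have h1 : (directProd G (⊤ : SimpleGraph (Fin 2))).Adj (x, c) (y, c + 1) :=
      directProd_top_adj.mpr ⟨h, show c ≠ c + 1 by omega⟩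
    have h2 := ih (c + 1)
    have : c + 1 + (q.length : Fin 2) = c + (((q.length + 1 : ℕ)) : Fin 2) := by
      push_cast; ring
    rw [this] at h2
    simpa [SimpleGraph.Walk.length_cons] using h1.reachable.trans h2

theorem exists_odd_closed_walk (hconn : G.Connected) (hnb : ¬ _root_.IsBipartite G) :
    ∃ (r : V) (w : G.Walk r r), Odd w.length := by
  have hne : Nonempty V := hconn.nonempty
  obtain ⟨r⟩ := hne
  set A : Set V := {v | ∃ p : G.Walk r v, Even p.length} with hA
  rw [_root_.IsBipartite] at hnb
  push_neg at hnb
  obtain ⟨u, v, hadj, hiff⟩ := hnb A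
  have key : ∃ (p : G.Walk r u) (q : G.Walk r v), Even (p.length + q.length) := by
    rcases hiff with ⟨hu, hv⟩ | ⟨hu, hv⟩
    · obtain ⟨p, hp⟩ := hu
      obtain ⟨q, hq⟩ := hv
      exact ⟨p, q, hp.add hq⟩
    · obtain ⟨p⟩ := hconn.preconnected r u
      obtain ⟨q⟩ := hconn.preconnected r v
      have hp : ¬ Even p.length := fun h => hu ⟨p, h⟩
      have hq : ¬ Even q.length := fun h => hv ⟨q, h⟩
      rw [Nat.not_even_iff_odd] at hp hq
      exact ⟨p, q, hp.add_odd hq⟩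
  obtain ⟨p, q, hpq⟩ := key
  refine ⟨r, p.append ((SimpleGraph.Walk.cons hadj SimpleGraph.Walk.nil).append q.reverse), ?_⟩
  simp only [SimpleGraph.Walk.length_append, SimpleGraph.Walk.length_cons,
    SimpleGraph.Walk.length_nil, SimpleGraph.Walk.length_reverse]
  rcases hpq with ⟨m, hm⟩
  exact ⟨m, by omega⟩

theorem parity_flip (hconn : G.Connected) (hnb : ¬ _root_.IsBipartite G) (y : V) (c : Fin 2) :
    (directProd G (⊤ : SimpleGraph (Fin 2))).Reachable (y, c) (y, c + 1) := by
  obtain ⟨r, w, hw⟩ := exists_odd_closed_walk hconn hnb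
  obtain ⟨p⟩ := hconn.preconnected y r
  have h1 := walk_lift p c
  have h2 := walk_lift w (c + (p.length : Fin 2))
  have h3 := walk_lift p.reverse (c + (p.length : Fin 2) + (w.length : Fin 2))
  rw [SimpleGraph.Walk.length_reverse] at h3
  have hfin : c + (p.length : Fin 2) + (w.length : Fin 2) + ((p.length : ℕ) : Fin 2)
      = c + 1 := by
    rw [odd_cast_fin2 hw]
    omega
  rw [hfin] at h3
  exact h1.trans (h2.trans h3)

theorem double_cover_connected (hconn : G.Connected) (hnb : ¬ _root_.IsBipartite G) :
    (directProd G (⊤ : SimpleGraph (Fin 2))).Connected := by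
  have hne : Nonempty V := hconn.nonempty
  rw [SimpleGraph.connected_iff]
  refine ⟨?_, by infer_instance⟩
  rintro ⟨x, c⟩ ⟨y, d⟩
  obtain ⟨p⟩ := hconn.preconnected x y
  have h1 := walk_lift p c
  by_cases h : c + (p.length : Fin 2) = d
  · rwa [h] at h1
  · have hd : d = c + (p.length : Fin 2) + 1 := by omega
    rw [hd]
    exact h1.trans (parity_flip hconn hnb y _)

end Aux

/-- If `G` is a connected, non-bipartite, total `k`-uniform graph, then its bipartite double
cover `G × K₂` is a connected total `2k`-uniform graph. -/
theorem stmt_11 {V : Type*} [Finite V] (G : SimpleGraph V) (k : ℕ)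
    (hiso : NoIsolatedVerts G) (hconn : G.Connected) (hnb : ¬ _root_.IsBipartite G)
    (huni : TotalKUniform G k) :
    (directProd G (⊤ : SimpleGraph (Fin 2))).Connected ∧
    TotalKUniform (directProd G (⊤ : SimpleGraph (Fin 2))) (2 * k) := by
  classical
  obtain ⟨hk1, hk2⟩ := huni
  rw [totalDomNum] at hk1
  rw [grundyTotalDomNum] at hk2
  -- γ_t(G) is attained
  have hStG_ne : {n | ∃ A : Set V, TotalDomSet G A ∧ A.ncard = n}.Nonempty := by
    refine ⟨(Set.univ : Set V).ncard, Set.univ, ?_, rfl⟩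
    intro v
    obtain ⟨w, hw⟩ := hiso v
    exact ⟨w, trivial, hw⟩
  obtain ⟨A, hA, hAcard⟩ : ∃ A : Set V, TotalDomSet G A ∧ A.ncard = k := by
    have := Nat.sInf_mem hStG_ne
    rw [hk1] at this
    exact this
  -- γ_gr^t(G) is attained, and legal sequences have length ≤ k
  have hSgG_bdd : BddAbove {n | ∃ s : List V, TotalDomSeq G s ∧ s.length = n} := by
    refine ⟨Nat.card V, ?_⟩
    rintro n ⟨s, hs, rfl⟩
    exact list_length_le_card hs.1.1
  have hSgG_ne : {n | ∃ s : List V, TotalDomSeq G s ∧ s.length = n}.Nonempty := by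
    obtain ⟨t, ht1, ht2, _⟩ := exists_tds_extend hiso [] LegalR.nil
    exact ⟨t.length, t, ⟨ht1.legalSeq, ht2⟩, rfl⟩
  obtain ⟨σ, hσ, hσlen⟩ : ∃ s : List V, TotalDomSeq G s ∧ s.length = k := by
    have := Nat.sSup_mem hSgG_ne hSgG_bdd
    rw [hk2] at this
    exact this
  have hlegal_le : ∀ s : List V, LegalR G s → s.length ≤ k := by
    intro s hs
    obtain ⟨t, ht1, ht2, ht3⟩ := exists_tds_extend hiso s hs
    have : t.length ≤ k := by
      rw [← hk2]
      exact le_csSup hSgG_bdd ⟨t, ⟨ht1.legalSeq, ht2⟩, rfl⟩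
    omega
  -- the lifted total dominating sequence of the double cover
  have hσR : LegalR G σ := hσ.1.legalR
  set L : List (V × Fin 2) :=
    σ.map (fun v => (v, (0 : Fin 2))) ++ σ.map (fun v => (v, (1 : Fin 2))) with hL
  have hLlegal : LegalR (directProd G (⊤ : SimpleGraph (Fin 2))) L := by
    refine lift1_append hiso hσR _ (lift0_legal hσR) ?_
    intro p hp
    simp only [List.mem_map] at hp
    obtain ⟨v, _, rfl⟩ := hp
    rfl
  have hLdom : TotalDomSet (directProd G (⊤ : SimpleGraph (Fin 2))) {p | p ∈ L} := by
    rintro ⟨v, c⟩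
    obtain ⟨a, haσ, hadj⟩ := hσ.2 v
    simp only [Set.mem_setOf_eq] at haσ
    have hc : c = 0 ∨ c = 1 := by omega
    rcases hc with rfl | rfl
    · refine ⟨(a, 1), ?_, directProd_top_adj.mpr ⟨hadj, by simp⟩⟩
      simp only [hL, Set.mem_setOf_eq, List.mem_append, List.mem_map]
      exact Or.inr ⟨a, haσ, rfl⟩
    · refine ⟨(a, 0), ?_, directProd_top_adj.mpr ⟨hadj, by simp⟩⟩
      simp only [hL, Set.mem_setOf_eq, List.mem_append, List.mem_map]
      exact Or.inl ⟨a, haσ, rfl⟩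
  have hLlen : L.length = 2 * k := by
    simp [hL, hσlen]; ring
  have hLmem : (2 * k) ∈
      {n | ∃ s : List (V × Fin 2),
        TotalDomSeq (directProd G (⊤ : SimpleGraph (Fin 2))) s ∧ s.length = n} :=
    ⟨L, ⟨hLlegal.legalSeq, hLdom⟩, hLlen⟩
  -- total domination number of the double cover
  have htd : totalDomNum (directProd G (⊤ : SimpleGraph (Fin 2))) = 2 * k := by
    rw [totalDomNum]
    apply le_antisymm
    · apply Nat.sInf_le
      exact ⟨A ×ˢ (Set.univ : Set (Fin 2)), tds_lift hA, by rw [ncard_prod_univ_fin2, hAcard]⟩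
    · apply le_csInf
      · exact ⟨(A ×ˢ (Set.univ : Set (Fin 2))).ncard, A ×ˢ (Set.univ : Set (Fin 2)),
          tds_lift hA, rfl⟩
      · rintro n ⟨B, hB, rfl⟩
        have h0 : k ≤ {v | (v, (0:Fin 2)) ∈ B}.ncard := by
          rw [← hk1]; exact Nat.sInf_le ⟨_, tds_proj hB 0, rfl⟩
        have h1 : k ≤ {v | (v, (1:Fin 2)) ∈ B}.ncard := by
          rw [← hk1]; exact Nat.sInf_le ⟨_, tds_proj hB 1, rfl⟩
        rw [ncard_split_fin2 B]
        omega
  -- Grundy total domination number of the double cover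
  have hgr : grundyTotalDomNum (directProd G (⊤ : SimpleGraph (Fin 2))) = 2 * k := by
    rw [grundyTotalDomNum]
    apply le_antisymm
    · apply csSup_le ⟨2 * k, hLmem⟩
      rintro n ⟨s, hs, rfl⟩
      have hsR := hs.1.legalR
      have h0 := hlegal_le _ (projSide_legal hsR 0)
      have h1 := hlegal_le _ (projSide_legal hsR 1)
      rw [projSide_length s]
      omega
    · apply le_csSup ?_ hLmem
      refine ⟨Nat.card (V × Fin 2), ?_⟩
      rintro n ⟨s, hs, rfl⟩
      exact list_length_le_card hs.1.1
  exact ⟨double_cover_connected hconn hnb, htd, hgr⟩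
end

section
/- For every n ≥ 3, the crown graph on 2n vertices (the complete bipartite graph K_{n,n} with a perfect matching removed) is a connected total 4-uniform graph, i.e., its total domination number and Grundy total domination number both equal 4. -/
open SimpleGraph

/-- The crown graph on `2n` vertices: `K_{n,n}` minus a perfect matching, with parts
`{x₁,…,xₙ}` and `{y₁,…,yₙ}` and `xᵢ` adjacent to `yⱼ` iff `i ≠ j`. -/
def crownGraph (n : ℕ) : SimpleGraph (Fin n ⊕ Fin n) where
  Adj a b := ∃ i j : Fin n, i ≠ j ∧
    ((a = Sum.inl i ∧ b = Sum.inr j) ∨ (a = Sum.inr i ∧ b = Sum.inl j))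
  symm := by
    constructor
    rintro a b ⟨i, j, hij, h | h⟩
    · exact ⟨j, i, hij.symm, Or.inr ⟨h.2, h.1⟩⟩
    · exact ⟨j, i, hij.symm, Or.inl ⟨h.2, h.1⟩⟩
  loopless := by
    constructor
    rintro a ⟨i, j, hij, ⟨h1, h2⟩ | ⟨h1, h2⟩⟩ <;> simp_all

variable {n : ℕ}

lemma crown_lr {i j : Fin n} : (crownGraph n).Adj (Sum.inl i) (Sum.inr j) ↔ i ≠ j := by
  constructor
  · rintro ⟨a, b, hab, ⟨h1, h2⟩ | ⟨h1, h2⟩⟩ <;> simp_all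
  · intro h; exact ⟨i, j, h, Or.inl ⟨rfl, rfl⟩⟩

lemma crown_rl {i j : Fin n} : (crownGraph n).Adj (Sum.inr i) (Sum.inl j) ↔ i ≠ j := by
  constructor
  · rintro ⟨a, b, hab, ⟨h1, h2⟩ | ⟨h1, h2⟩⟩ <;> simp_all
  · intro h; exact ⟨i, j, h, Or.inr ⟨rfl, rfl⟩⟩

lemma crown_ll {i j : Fin n} : ¬ (crownGraph n).Adj (Sum.inl i) (Sum.inl j) := by
  rintro ⟨a, b, hab, ⟨h1, h2⟩ | ⟨h1, h2⟩⟩ <;> simp_all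

lemma crown_rr {i j : Fin n} : ¬ (crownGraph n).Adj (Sum.inr i) (Sum.inr j) := by
  rintro ⟨a, b, hab, ⟨h1, h2⟩ | ⟨h1, h2⟩⟩ <;> simp_all

lemma exists_ne_ne (hn : 3 ≤ n) (i j : Fin n) : ∃ k : Fin n, k ≠ i ∧ k ≠ j := by
  have h : (({i, j} : Finset (Fin n))ᶜ).Nonempty := by
    rw [← Finset.card_pos, Finset.card_compl]
    have : ({i, j} : Finset (Fin n)).card ≤ 2 := Finset.card_insert_le _ _ |>.trans (by simp)
    simp only [Fintype.card_fin]
    omega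
  obtain ⟨k, hk⟩ := h
  simp only [Finset.mem_compl, Finset.mem_insert, Finset.mem_singleton, not_or] at hk
  exact ⟨k, hk.1, hk.2⟩

lemma crown_reach_lr (hn : 3 ≤ n) (i j : Fin n) :
    (crownGraph n).Reachable (Sum.inl i) (Sum.inr j) := by
  by_cases h : i = j
  · subst h
    obtain ⟨k, hk, -⟩ := exists_ne_ne hn i i
    obtain ⟨m, hm1, hm2⟩ := exists_ne_ne hn i k
    exact (Adj.reachable (crown_lr.2 (Ne.symm hk))).trans
      ((Adj.reachable (crown_rl.2 (fun h => hm2 h.symm))).trans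
        (Adj.reachable (crown_lr.2 hm1)))
  · exact Adj.reachable (crown_lr.2 h)

lemma crown_reach_ll (hn : 3 ≤ n) (i j : Fin n) :
    (crownGraph n).Reachable (Sum.inl i) (Sum.inl j) := by
  obtain ⟨k, hk1, hk2⟩ := exists_ne_ne hn i j
  exact (Adj.reachable (crown_lr.2 (Ne.symm hk1))).trans
    (Adj.reachable (crown_rl.2 hk2))

lemma crown_reach_rr (hn : 3 ≤ n) (i j : Fin n) :
    (crownGraph n).Reachable (Sum.inr i) (Sum.inr j) := by
  obtain ⟨k, hk1, hk2⟩ := exists_ne_ne hn i j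
  exact (Adj.reachable (crown_rl.2 (Ne.symm hk1))).trans
    (Adj.reachable (crown_lr.2 hk2))

lemma crown_connected (hn : 3 ≤ n) : (crownGraph n).Connected := by
  have hpos : 0 < n := by omega
  rw [connected_iff]
  refine ⟨fun u v => ?_, ⟨Sum.inl ⟨0, hpos⟩⟩⟩
  rcases u with i | i <;> rcases v with j | j
  · exact crown_reach_ll hn i j
  · exact crown_reach_lr hn i j
  · exact (crown_reach_lr hn j i).symm
  · exact crown_reach_rr hn i j

-- no third left vertex: three positions a < c, b < c, with left elements
lemma crown_key3L {s : List (Fin n ⊕ Fin n)} (hleg : LegalSeq (crownGraph n) s)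
    {a b c : ℕ} (ha : a < s.length) (hb : b < s.length) (hc : c < s.length)
    (hac : a < c) (hbc : b < c) (hab : a ≠ b)
    {p q r : Fin n} (hga : s[a] = Sum.inl p) (hgb : s[b] = Sum.inl q)
    (hgc : s[c] = Sum.inl r) : False := by
  have hpq : p ≠ q := by
    intro h
    exact hab ((hleg.1.getElem_inj_iff (hi := ha) (hj := hb)).1 (by rw [hga, hgb, h]))
  obtain ⟨w, hw, hall⟩ := hleg.2 c hc (by omega)
  rw [List.get_eq_getElem, hgc] at hw
  rcases w with m | m
  · exact crown_ll hw
  · have hma : s[a] ∈ s.take c := by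
      have h1 : a < (s.take c).length := by simp [List.length_take]; omega
      have := List.getElem_take (xs := s) (j := c) (i := a) (h := h1)
      rw [← this]; exact List.getElem_mem h1
    have hmb : s[b] ∈ s.take c := by
      have h1 : b < (s.take c).length := by simp [List.length_take]; omega
      have := List.getElem_take (xs := s) (j := c) (i := b) (h := h1)
      rw [← this]; exact List.getElem_mem h1
    have h1 := hall _ hma
    have h2 := hall _ hmb
    rw [hga, crown_lr] at h1
    rw [hgb, crown_lr] at h2
    push_neg at h1 h2
    exact hpq (h1.trans h2.symm)

lemma crown_key3R {s : List (Fin n ⊕ Fin n)} (hleg : LegalSeq (crownGraph n) s)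
    {a b c : ℕ} (ha : a < s.length) (hb : b < s.length) (hc : c < s.length)
    (hac : a < c) (hbc : b < c) (hab : a ≠ b)
    {p q r : Fin n} (hga : s[a] = Sum.inr p) (hgb : s[b] = Sum.inr q)
    (hgc : s[c] = Sum.inr r) : False := by
  have hpq : p ≠ q := by
    intro h
    exact hab ((hleg.1.getElem_inj_iff (hi := ha) (hj := hb)).1 (by rw [hga, hgb, h]))
  obtain ⟨w, hw, hall⟩ := hleg.2 c hc (by omega)
  rw [List.get_eq_getElem, hgc] at hw
  rcases w with m | m
  · have hma : s[a] ∈ s.take c := by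
      have h1 : a < (s.take c).length := by simp [List.length_take]; omega
      have := List.getElem_take (xs := s) (j := c) (i := a) (h := h1)
      rw [← this]; exact List.getElem_mem h1
    have hmb : s[b] ∈ s.take c := by
      have h1 : b < (s.take c).length := by simp [List.length_take]; omega
      have := List.getElem_take (xs := s) (j := c) (i := b) (h := h1)
      rw [← this]; exact List.getElem_mem h1
    have h1 := hall _ hma
    have h2 := hall _ hmb
    rw [hga, crown_rl] at h1
    rw [hgb, crown_rl] at h2
    push_neg at h1 h2
    exact hpq (h1.trans h2.symm)
  · exact crown_rr hw

lemma crown_filterL_le {s : List (Fin n ⊕ Fin n)} (hleg : LegalSeq (crownGraph n) s) :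
    (s.filter (fun v => v.isLeft)).length ≤ 2 := by
  by_contra h
  push_neg at h
  set t := s.filter (fun v => v.isLeft) with ht
  have htn : t.Nodup := hleg.1.filter _
  have h0 : 0 < t.length := by omega
  have h1 : 1 < t.length := by omega
  have h2 : 2 < t.length := by omega
  have key : ∀ k, (hk : k < t.length) → ∃ (a : ℕ) (ha : a < s.length) (p : Fin n),
      s[a] = Sum.inl p ∧ s[a] = t[k] := by
    intro k hk
    have hmem : t[k] ∈ t := List.getElem_mem hk
    have hs : t[k] ∈ s := List.mem_of_mem_filter hmem
    have hl : (t[k]).isLeft := by simpa using List.of_mem_filter hmem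
    obtain ⟨a, ha, hga⟩ := List.mem_iff_getElem.1 hs
    obtain ⟨p, hp⟩ := Sum.isLeft_iff.1 hl
    exact ⟨a, ha, p, by rw [hga, hp], hga⟩
  obtain ⟨a, ha, p, hpa, hea⟩ := key 0 h0
  obtain ⟨b, hb, q, hpb, heb⟩ := key 1 h1
  obtain ⟨c, hc, r, hpc, hec⟩ := key 2 h2
  have hab : a ≠ b := by
    intro h'; subst h'
    have := (htn.getElem_inj_iff (hi := h0) (hj := h1)).1 (hea.symm.trans heb)
    omega
  have hac : a ≠ c := by
    intro h'; subst h'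
    have := (htn.getElem_inj_iff (hi := h0) (hj := h2)).1 (hea.symm.trans hec)
    omega
  have hbc : b ≠ c := by
    intro h'; subst h'
    have := (htn.getElem_inj_iff (hi := h1) (hj := h2)).1 (heb.symm.trans hec)
    omega
  by_cases h1' : a < c ∧ b < c
  · exact crown_key3L hleg ha hb hc h1'.1 h1'.2 hab hpa hpb hpc
  · by_cases h2' : a < b ∧ c < b
    · exact crown_key3L hleg ha hc hb h2'.1 h2'.2 hac hpa hpc hpb
    · have h3' : b < a ∧ c < a := by omega
      exact crown_key3L hleg hb hc ha h3'.1 h3'.2 hbc hpb hpc hpa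

lemma crown_filterR_le {s : List (Fin n ⊕ Fin n)} (hleg : LegalSeq (crownGraph n) s) :
    (s.filter (fun v => v.isRight)).length ≤ 2 := by
  by_contra h
  push_neg at h
  set t := s.filter (fun v => v.isRight) with ht
  have htn : t.Nodup := hleg.1.filter _
  have h0 : 0 < t.length := by omega
  have h1 : 1 < t.length := by omega
  have h2 : 2 < t.length := by omega
  have key : ∀ k, (hk : k < t.length) → ∃ (a : ℕ) (ha : a < s.length) (p : Fin n),
      s[a] = Sum.inr p ∧ s[a] = t[k] := by
    intro k hk
    have hmem : t[k] ∈ t := List.getElem_mem hk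
    have hs : t[k] ∈ s := List.mem_of_mem_filter hmem
    have hl : (t[k]).isRight := by simpa using List.of_mem_filter hmem
    obtain ⟨a, ha, hga⟩ := List.mem_iff_getElem.1 hs
    obtain ⟨p, hp⟩ := Sum.isRight_iff.1 hl
    exact ⟨a, ha, p, by rw [hga, hp], hga⟩
  obtain ⟨a, ha, p, hpa, hea⟩ := key 0 h0
  obtain ⟨b, hb, q, hpb, heb⟩ := key 1 h1
  obtain ⟨c, hc, r, hpc, hec⟩ := key 2 h2
  have hab : a ≠ b := by
    intro h'; subst h'
    have := (htn.getElem_inj_iff (hi := h0) (hj := h1)).1 (hea.symm.trans heb)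
    omega
  have hac : a ≠ c := by
    intro h'; subst h'
    have := (htn.getElem_inj_iff (hi := h0) (hj := h2)).1 (hea.symm.trans hec)
    omega
  have hbc : b ≠ c := by
    intro h'; subst h'
    have := (htn.getElem_inj_iff (hi := h1) (hj := h2)).1 (heb.symm.trans hec)
    omega
  by_cases h1' : a < c ∧ b < c
  · exact crown_key3R hleg ha hb hc h1'.1 h1'.2 hab hpa hpb hpc
  · by_cases h2' : a < b ∧ c < b
    · exact crown_key3R hleg ha hc hb h2'.1 h2'.2 hac hpa hpc hpb
    · have h3' : b < a ∧ c < a := by omega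
      exact crown_key3R hleg hb hc ha h3'.1 h3'.2 hbc hpb hpc hpa

lemma crown_legal_len {s : List (Fin n ⊕ Fin n)} (hleg : LegalSeq (crownGraph n) s) :
    s.length ≤ 4 := by
  have hL := crown_filterL_le hleg
  have hR := crown_filterR_le hleg
  have heq := List.length_eq_countP_add_countP (fun v : Fin n ⊕ Fin n => v.isLeft) (l := s)
  rw [List.countP_eq_length_filter, List.countP_eq_length_filter] at heq
  have hcongr : s.filter (fun a => decide ¬((fun v : Fin n ⊕ Fin n => v.isLeft) a = true))
      = s.filter (fun v => v.isRight) := List.filter_congr (fun a _ => by cases a <;> simp)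
  rw [hcongr] at heq
  omega

lemma crown_seq (hn : 3 ≤ n) :
    TotalDomSeq (crownGraph n)
      [Sum.inl ⟨0, by omega⟩, Sum.inl ⟨1, by omega⟩, Sum.inr ⟨0, by omega⟩,
        Sum.inr ⟨1, by omega⟩] := by
  set i0 : Fin n := ⟨0, by omega⟩ with hi0
  set i1 : Fin n := ⟨1, by omega⟩ with hi1
  have h01 : i0 ≠ i1 := by simp [hi0, hi1, Fin.ext_iff]
  refine ⟨⟨?_, ?_⟩, ?_⟩
  · simp [h01, h01.symm]
  · intro i h hi
    have h4 : i < 4 := by simpa using h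
    interval_cases i
    · refine ⟨Sum.inr i0, crown_lr.2 h01.symm, ?_⟩
      intro u hu
      simp only [List.take, List.mem_cons, List.not_mem_nil, or_false] at hu
      subst hu
      simp [crown_lr]
    · refine ⟨Sum.inl i1, crown_rl.2 h01, ?_⟩
      intro u hu
      simp only [List.take, List.mem_cons, List.not_mem_nil, or_false] at hu
      rcases hu with rfl | rfl <;> simp [crown_ll]
    · refine ⟨Sum.inl i0, crown_rl.2 h01.symm, ?_⟩
      intro u hu
      simp only [List.take, List.mem_cons, List.not_mem_nil, or_false] at hu
      rcases hu with rfl | rfl | rfl <;> simp [crown_ll, crown_rl]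
  · intro v
    rcases v with i | i
    · by_cases h : i = i0
      · exact ⟨Sum.inr i1, by simp, crown_lr.2 (h ▸ h01)⟩
      · exact ⟨Sum.inr i0, by simp, crown_lr.2 h⟩
    · by_cases h : i = i0
      · exact ⟨Sum.inl i1, by simp, crown_rl.2 (h ▸ h01)⟩
      · exact ⟨Sum.inl i0, by simp, crown_rl.2 h⟩

lemma crown_totdom_ge (hn : 3 ≤ n) {A : Set (Fin n ⊕ Fin n)}
    (hA : TotalDomSet (crownGraph n) A) : 4 ≤ A.ncard := by
  have hpos : 0 < n := by omega
  set i0 : Fin n := ⟨0, hpos⟩ with hi0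
  obtain ⟨a1, ha1, hadj1⟩ := hA (Sum.inr i0)
  rcases a1 with p | p
  swap
  · exact absurd hadj1 crown_rr
  obtain ⟨a2, ha2, hadj2⟩ := hA (Sum.inr p)
  rcases a2 with q | q
  swap
  · exact absurd hadj2 crown_rr
  obtain ⟨b1, hb1, hadj3⟩ := hA (Sum.inl i0)
  rcases b1 with u | u
  · exact absurd hadj3 crown_ll
  obtain ⟨b2, hb2, hadj4⟩ := hA (Sum.inl u)
  rcases b2 with w | w
  · exact absurd hadj4 crown_ll
  have hpq : p ≠ q := crown_rl.1 hadj2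
  have huw : u ≠ w := crown_lr.1 hadj4
  have hsub : ({Sum.inl p, Sum.inl q, Sum.inr u, Sum.inr w} :
      Set (Fin n ⊕ Fin n)) ⊆ A := by
    intro x hx
    rcases hx with rfl | rfl | rfl | rfl <;> assumption
  have hcard : ({Sum.inl p, Sum.inl q, Sum.inr u, Sum.inr w} :
      Set (Fin n ⊕ Fin n)).ncard = 4 := by
    rw [Set.ncard_insert_of_notMem (by simp [hpq]),
      Set.ncard_insert_of_notMem (by simp),
      Set.ncard_pair (by simp [huw])]
  calc 4 = ({Sum.inl p, Sum.inl q, Sum.inr u, Sum.inr w} :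
      Set (Fin n ⊕ Fin n)).ncard := hcard.symm
    _ ≤ A.ncard := Set.ncard_le_ncard hsub (Set.toFinite A)

/-- For every `n ≥ 3`, the crown graph on `2n` vertices is a connected total 4-uniform
graph. -/
theorem stmt_13 (n : ℕ) (hn : 3 ≤ n) :
    (crownGraph n).Connected ∧ TotalKUniform (crownGraph n) 4 := by
  refine ⟨crown_connected hn, ?_, ?_⟩
  · -- totalDomNum = 4
    set i0 : Fin n := ⟨0, by omega⟩ with hi0
    set i1 : Fin n := ⟨1, by omega⟩ with hi1
    have h01 : i0 ≠ i1 := by simp [hi0, hi1, Fin.ext_iff]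
    have hseq := crown_seq hn
    have hset : ({v | v ∈ [Sum.inl i0, Sum.inl i1, Sum.inr i0, Sum.inr i1]} :
        Set (Fin n ⊕ Fin n)) =
        {Sum.inl i0, Sum.inl i1, Sum.inr i0, Sum.inr i1} := by
      ext v; simp
    have hcard : ({Sum.inl i0, Sum.inl i1, Sum.inr i0, Sum.inr i1} :
        Set (Fin n ⊕ Fin n)).ncard = 4 := by
      rw [Set.ncard_insert_of_notMem (by simp [h01]),
        Set.ncard_insert_of_notMem (by simp),
        Set.ncard_pair (by simp [h01])]
    have hmem : 4 ∈ {m | ∃ A : Set (Fin n ⊕ Fin n),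
        TotalDomSet (crownGraph n) A ∧ A.ncard = m} :=
      ⟨_, hseq.2, by rw [hset]; exact hcard⟩
    refine le_antisymm (Nat.sInf_le hmem) (le_csInf ⟨4, hmem⟩ ?_)
    rintro m ⟨A, hA, rfl⟩
    exact crown_totdom_ge hn hA
  · -- grundyTotalDomNum = 4
    have hmem : 4 ∈ {m | ∃ s : List (Fin n ⊕ Fin n),
        TotalDomSeq (crownGraph n) s ∧ s.length = m} :=
      ⟨_, crown_seq hn, rfl⟩
    have hub : ∀ m ∈ {m | ∃ s : List (Fin n ⊕ Fin n),
        TotalDomSeq (crownGraph n) s ∧ s.length = m}, m ≤ 4 := by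
      rintro m ⟨s, hs, rfl⟩
      exact crown_legal_len hs.1
    exact le_antisymm (csSup_le ⟨4, hmem⟩ hub) (le_csSup ⟨4, hub⟩ hmem)
end
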